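/- arXiv:1903.03818 — 6 statements merged into one kernel-verified Lean document; each statement's English description precedes it below -/
import Mathlib

section
/- For any finite group G and prime p, the p-part of |G| divides the number of p-singular elements of G, i.e. |G|_p divides |{g ∈ G : g^(|G|_p) = 1}|. -/
open Subgroup MulAction

namespace FrobeniusPSingular

variable {G : Type*} [Group G]

/-- `x` is a `p`-element. -/
def pE (p : ℕ) (x : G) : Prop := ∃ k, x ^ p ^ k = 1

/-- `x` is `p`-regular. -/
def pR (p : ℕ) (y : G) : Prop := (orderOf y).Coprime p

theorem pE_iff_pow_card [Finite G] {p : ℕ} (hp : p.Prime) (x : G) :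
    pE p x ↔ x ^ (p ^ ((Nat.card G).factorization p)) = 1 := by
  constructor
  · rintro ⟨k, hk⟩
    have h1 : orderOf x ∣ p ^ k := orderOf_dvd_of_pow_eq_one hk
    obtain ⟨j, hj, hxj⟩ := (Nat.dvd_prime_pow hp).mp h1
    have h2 : orderOf x ∣ Nat.card G := orderOf_dvd_natCard x
    rw [hxj] at h2
    have hle : j ≤ (Nat.card G).factorization p :=
      (Nat.Prime.pow_dvd_iff_le_factorization hp Nat.card_pos.ne').mp h2
    exact orderOf_dvd_iff_pow_eq_one.mp (hxj ▸ pow_dvd_pow p hle)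
  · intro h; exact ⟨_, h⟩

theorem eq_one_of_pE_pR {p : ℕ} {x : G} (hE : pE p x) (hR : pR p x) : x = 1 := by
  obtain ⟨k, hk⟩ := hE
  have h1 : orderOf x ∣ p ^ k := orderOf_dvd_of_pow_eq_one hk
  have h2 : (orderOf x).Coprime (p ^ k) := Nat.Coprime.pow_right k hR
  rw [← orderOf_eq_one_iff]
  exact h2.eq_one_of_dvd h1

theorem pE_mul {p : ℕ} {x y : G} (h : Commute x y) (hx : pE p x) (hy : pE p y) :
    pE p (x * y) := by
  obtain ⟨k, hk⟩ := hx; obtain ⟨l, hl⟩ := hy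
  refine ⟨k + l, ?_⟩
  have h1 : x ^ p ^ (k + l) = 1 := by rw [pow_add, pow_mul, hk, one_pow]
  have h2 : y ^ p ^ (k + l) = 1 := by rw [pow_add, mul_comm (p ^ k), pow_mul, hl, one_pow]
  rw [h.mul_pow, h1, h2, one_mul]

theorem pE_inv {p : ℕ} {x : G} (hx : pE p x) : pE p x⁻¹ := by
  obtain ⟨k, hk⟩ := hx; exact ⟨k, by rw [inv_pow, hk, inv_one]⟩

theorem pR_mul {p : ℕ} {x y : G} (h : Commute x y) (hx : pR p x) (hy : pR p y) :
    pR p (x * y) :=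
  Nat.Coprime.coprime_dvd_left (h.orderOf_mul_dvd_mul_orderOf) (Nat.Coprime.mul hx hy)

theorem pR_inv {p : ℕ} {x : G} (hx : pR p x) : pR p x⁻¹ := by
  unfold pR at *; rwa [orderOf_inv]

theorem mem_zpowers_left {p : ℕ} {x y : G} (h : Commute x y) (hx : pE p x) (hy : pR p y) :
    x ∈ zpowers (x * y) := by
  obtain ⟨k, hk⟩ := hx
  have co : Nat.Coprime (p ^ k) (orderOf y) := Nat.Coprime.pow_left k hy.symm
  obtain ⟨N, hN1, hN2⟩ := Nat.chineseRemainder co 1 0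
  have hxN : x ^ N = x := by
    nth_rewrite 2 [← pow_one x]
    exact pow_eq_pow_iff_modEq.mpr (hN1.of_dvd (orderOf_dvd_of_pow_eq_one hk))
  have hyN : y ^ N = 1 := by
    apply orderOf_dvd_iff_pow_eq_one.mp
    exact (Nat.modEq_zero_iff_dvd).mp hN2
  refine ⟨(N : ℤ), ?_⟩
  show (x * y) ^ (N : ℤ) = x
  rw [zpow_natCast, h.mul_pow, hxN, hyN, mul_one]

theorem exists_decomp [Finite G] {p : ℕ} (hp : p.Prime) (g : G) :
    ∃ x y : G, x * y = g ∧ Commute x y ∧ pE p x ∧ pR p y := by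
  have hn : orderOf g ≠ 0 := (orderOf_pos g).ne'
  set n := orderOf g with hndef
  set k := n.factorization p with hkdef
  set m := n / p ^ k with hmdef
  have hco : Nat.Coprime p m := Nat.coprime_ordCompl hp hn
  have hnm : p ^ k * m = n := Nat.ordProj_mul_ordCompl_eq_self n p
  have co : Nat.Coprime (p ^ k) m := Nat.Coprime.pow_left k hco
  obtain ⟨N₁, hN11, hN12⟩ := Nat.chineseRemainder co 1 0
  obtain ⟨N₂, hN21, hN22⟩ := Nat.chineseRemainder co 0 1
  refine ⟨g ^ N₁, g ^ N₂, ?_, (Commute.refl g).pow_pow _ _, ?_, ?_⟩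
  · rw [← pow_add]
    nth_rewrite 2 [show g = g ^ 1 from (pow_one g).symm]
    apply pow_eq_pow_iff_modEq.mpr
    rw [← hndef, ← hnm]
    apply (Nat.modEq_and_modEq_iff_modEq_mul co).mp
    exact ⟨by simpa using hN11.add hN21, by simpa using hN12.add hN22⟩
  · refine ⟨k, ?_⟩
    rw [← pow_mul]
    apply orderOf_dvd_iff_pow_eq_one.mp
    rw [← hndef, ← hnm, mul_comm (p ^ k) m]
    exact Nat.mul_dvd_mul ((Nat.modEq_zero_iff_dvd).mp hN12) dvd_rfl
  · have h1 : (g ^ N₂) ^ m = 1 := by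
      rw [← pow_mul]
      apply orderOf_dvd_iff_pow_eq_one.mp
      rw [← hndef, ← hnm]
      exact Nat.mul_dvd_mul ((Nat.modEq_zero_iff_dvd).mp hN21) dvd_rfl
    exact Nat.Coprime.coprime_dvd_left (orderOf_dvd_of_pow_eq_one h1) hco.symm

theorem commute_of_zpowers {g a b : G} (ha : a ∈ zpowers g) (hb : b ∈ zpowers g) :
    Commute a b := by
  obtain ⟨i, rfl⟩ := ha; obtain ⟨j, rfl⟩ := hb
  exact (Commute.refl g).zpow_zpow i j

theorem decomp_unique {p : ℕ} {x y x' y' : G} (h : x * y = x' * y')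
    (c : Commute x y) (c' : Commute x' y') (hx : pE p x) (hy : pR p y)
    (hx' : pE p x') (hy' : pR p y') : x = x' ∧ y = y' := by
  have hxg : x ∈ zpowers (x * y) := mem_zpowers_left c hx hy
  have hxg' : x' ∈ zpowers (x * y) := h ▸ mem_zpowers_left c' hx' hy'
  have hyg : y ∈ zpowers (x * y) := by
    simpa [inv_mul_cancel_left] using mul_mem (inv_mem hxg) (mem_zpowers (x * y))
  have hyg' : y' ∈ zpowers (x * y) := by
    have h2 := mul_mem (inv_mem hxg') (mem_zpowers (x * y))
    rw [h, inv_mul_cancel_left] at h2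
    rwa [h]
  have key : x'⁻¹ * x = y' * y⁻¹ := by
    have hx2 : x = x' * y' * y⁻¹ := by rw [eq_mul_inv_iff_mul_eq]; exact h
    rw [hx2]
    group
  have hzE : pE p (x'⁻¹ * x) :=
    pE_mul (commute_of_zpowers (inv_mem hxg') hxg) (pE_inv hx') hx
  have hzR : pR p (x'⁻¹ * x) := by
    rw [key]
    exact pR_mul (commute_of_zpowers hyg' (inv_mem hyg)) hy' (pR_inv hy)
  have hz1 : x'⁻¹ * x = 1 := eq_one_of_pE_pR hzE hzR
  have hxx : x = x' := (inv_mul_eq_one.mp hz1).symm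
  refine ⟨hxx, ?_⟩
  rw [hxx] at h
  exact mul_left_cancel h

/-- Number of `p`-elements commuting with `y`. -/
noncomputable def Fc (p : ℕ) (y : G) : ℕ :=
  Nat.card {x : G // x ∈ centralizer ({y} : Set G) ∧ pE p x}

theorem card_decomp [Fintype G] {p : ℕ} (hp : p.Prime) [Fintype {y : G // pR p y}] :
    Fintype.card G = ∑ y : {y : G // pR p y}, Fc p y.val := by
  classical
  have hbij : Function.Bijective
      (fun s : Σ y : {y : G // pR p y}, {x : G // x ∈ centralizer ({y.val} : Set G) ∧ pE p x} =>
        s.2.val * s.1.val) := by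
    constructor
    · rintro ⟨⟨y1, hy1⟩, ⟨x1, hc1, hx1⟩⟩ ⟨⟨y2, hy2⟩, ⟨x2, hc2, hx2⟩⟩ hEq
      simp only at hEq
      obtain ⟨hx, hy⟩ := decomp_unique hEq
        (show Commute x1 y1 from Subgroup.mem_centralizer_singleton_iff.mp hc1)
        (show Commute x2 y2 from Subgroup.mem_centralizer_singleton_iff.mp hc2) hx1 hy1 hx2 hy2
      subst hx; subst hy; rfl
    · intro g
      obtain ⟨x, y, hxy, hc, hx, hy⟩ := exists_decomp hp g
      exact ⟨⟨⟨y, hy⟩, ⟨x, Subgroup.mem_centralizer_singleton_iff.mpr hc.eq, hx⟩⟩, hxy⟩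
  calc Fintype.card G
      = Fintype.card
        (Σ y : {y : G // pR p y}, {x : G // x ∈ centralizer ({y.val} : Set G) ∧ pE p x}) :=
        (Fintype.card_of_bijective hbij).symm
    _ = ∑ y : {y : G // pR p y},
        Fintype.card {x : G // x ∈ centralizer ({y.val} : Set G) ∧ pE p x} :=
        Fintype.card_sigma
    _ = ∑ y : {y : G // pR p y}, Fc p y.val := by
        refine Finset.sum_congr rfl fun y _ => ?_
        rw [Fc, Nat.card_eq_fintype_card]

theorem Fc_conj {p : ℕ} (g y : G) : Fc p (g * y * g⁻¹) = Fc p y := by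
  apply Nat.card_congr
  refine ⟨fun x => ⟨g⁻¹ * x.val * g, ?_, ?_⟩, fun x => ⟨g * x.val * g⁻¹, ?_, ?_⟩, ?_, ?_⟩
  · obtain ⟨hc, -⟩ := x.2
    have hc' := Subgroup.mem_centralizer_singleton_iff.mp hc
    apply Subgroup.mem_centralizer_singleton_iff.mpr
    have : g * ((g⁻¹ * x.val * g) * y) * g⁻¹ = g * (y * (g⁻¹ * x.val * g)) * g⁻¹ := by
      have h2 : g * ((g⁻¹ * x.val * g) * y) * g⁻¹ = x.val * (g * y * g⁻¹) := by group
      have h3 : g * (y * (g⁻¹ * x.val * g)) * g⁻¹ = (g * y * g⁻¹) * x.val := by group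
      rw [h2, h3, hc']
    exact mul_left_cancel (mul_right_cancel this)
  · obtain ⟨-, k, hk⟩ := x.2
    have hgen : ∀ (c z : G), z ^ p ^ k = 1 → (c * z * c⁻¹) ^ p ^ k = 1 := fun c z hz => by
      rw [conj_pow, hz, mul_one, mul_inv_cancel]
    exact ⟨k, by simpa using hgen g⁻¹ x.val hk⟩
  · obtain ⟨hc, -⟩ := x.2
    have hc' := Subgroup.mem_centralizer_singleton_iff.mp hc
    apply Subgroup.mem_centralizer_singleton_iff.mpr
    have h2 : (g * x.val * g⁻¹) * (g * y * g⁻¹) = g * (x.val * y) * g⁻¹ := by group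
    have h3 : (g * y * g⁻¹) * (g * x.val * g⁻¹) = g * (y * x.val) * g⁻¹ := by group
    rw [h2, h3, hc']
  · obtain ⟨-, k, hk⟩ := x.2
    exact ⟨k, by rw [conj_pow, hk, mul_one, mul_inv_cancel]⟩
  · intro x; ext; simp; group
  · intro x; ext; simp; group

theorem Fc_isConj {p : ℕ} {y z : G} (h : IsConj y z) : Fc p z = Fc p y := by
  obtain ⟨c, hc⟩ := isConj_iff.mp h
  rw [← hc, Fc_conj]

theorem dvd_sum_conjInv [Fintype G] {p : ℕ} (a : ℕ) :
    ∀ (m : ℕ) (B : Finset G), B.card ≤ m →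
      (∀ y ∈ B, ∀ g : G, g * y * g⁻¹ ∈ B) →
      (∀ y ∈ B, p ^ a ∣ Nat.card (orbit (ConjAct G) y) * Fc p y) →
      p ^ a ∣ ∑ y ∈ B, Fc p y := by
  classical
  intro m
  induction m with
  | zero =>
    intro B hB _ _
    rw [Nat.le_zero, Finset.card_eq_zero] at hB
    simp [hB]
  | succ m ih =>
    intro B hB hinv hkey
    rcases B.eq_empty_or_nonempty with rfl | ⟨y₀, hy₀⟩
    · simp
    set K : Finset G := (orbit (ConjAct G) y₀).toFinset with hK
    have hKB : K ⊆ B := by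
      intro z hz
      rw [hK, Set.mem_toFinset, ConjAct.mem_orbit_conjAct] at hz
      obtain ⟨c, hc⟩ := isConj_iff.mp hz.symm
      exact hc ▸ hinv y₀ hy₀ c
    have hy₀K : y₀ ∈ K := by rw [hK, Set.mem_toFinset]; exact mem_orbit_self y₀
    have hsplit : ∑ y ∈ B \ K, Fc p y + ∑ y ∈ K, Fc p y = ∑ y ∈ B, Fc p y :=
      Finset.sum_sdiff hKB
    have hconst : ∑ y ∈ K, Fc p y = K.card * Fc p y₀ := by
      rw [Finset.sum_congr rfl (fun z hz => ?_), Finset.sum_const, smul_eq_mul]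
      rw [hK, Set.mem_toFinset, ConjAct.mem_orbit_conjAct] at hz
      exact Fc_isConj hz.symm
    have hKcard : K.card = Nat.card (orbit (ConjAct G) y₀) := by
      rw [hK, Set.toFinset_card, Nat.card_eq_fintype_card]
    have h1 : p ^ a ∣ ∑ y ∈ K, Fc p y := by
      rw [hconst, hKcard]; exact hkey y₀ hy₀
    have h2 : p ^ a ∣ ∑ y ∈ B \ K, Fc p y := by
      apply ih (B \ K)
      · have : K.card ≤ B.card := Finset.card_le_card hKB
        have h3 : 1 ≤ K.card := Finset.card_pos.mpr ⟨y₀, hy₀K⟩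
        rw [Finset.card_sdiff_of_subset hKB]
        omega
      · intro y hy g
        rw [Finset.mem_sdiff] at hy ⊢
        refine ⟨hinv y hy.1 g, fun hmem => hy.2 ?_⟩
        rw [hK, Set.mem_toFinset, ConjAct.mem_orbit_conjAct] at hmem ⊢
        exact (isConj_iff.mpr ⟨g, rfl⟩ : IsConj y (g * y * g⁻¹)).trans hmem
      · intro y hy
        exact hkey y (Finset.mem_sdiff.mp hy).1
    rw [← hsplit]
    exact Nat.dvd_add h2 h1

theorem pE_coe {p : ℕ} {H : Subgroup G} (x : H) : pE p (x : G) ↔ pE p x := by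
  unfold pE
  refine exists_congr fun k => ?_
  rw [← SubgroupClass.coe_pow, ← OneMemClass.coe_one H, Subtype.ext_iff]

universe u

theorem aux (p : ℕ) (hp : p.Prime) :
    ∀ (n : ℕ) (G : Type u) [Group G] [Finite G], Nat.card G ≤ n →
      p ^ ((Nat.card G).factorization p) ∣
        Nat.card {g : G | g ^ (p ^ ((Nat.card G).factorization p)) = 1} := by
  intro n
  induction n with
  | zero =>
    intro G _ _ hle
    have : 0 < Nat.card G := Nat.card_pos
    omega
  | succ n IH =>
    intro G _ _ hle
    classical
    letI : Fintype G := Fintype.ofFinite G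
    set a := (Nat.card G).factorization p with ha
    have hset : Nat.card {g : G | g ^ p ^ a = 1} = Nat.card {x : G // pE p x} :=
      Nat.card_congr (Equiv.subtypeEquivRight fun x => (pE_iff_pow_card hp x).symm)
    rw [hset]
    set s := Nat.card {x : G // pE p x} with hs
    -- the decomposition identity
    have hdec : Fintype.card G = ∑ y : {y : G // pR p y}, Fc p y.val := card_decomp hp
    have hsub : ∑ y ∈ Finset.univ.filter (fun y : G => pR p y), Fc p y
        = ∑ y : {y : G // pR p y}, Fc p y.val :=
      Finset.sum_subtype _ (by simp) (Fc p)
    have hsplit := Finset.sum_filter_add_sum_filter_not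
      (Finset.univ.filter fun y : G => pR p y) (fun y => y ∈ center G) (Fc p)
    -- central part
    have hcent : ∀ y ∈ (Finset.univ.filter fun y : G => pR p y).filter (fun y => y ∈ center G),
        Fc p y = s := by
      intro y hy
      simp only [Finset.mem_filter] at hy
      apply Nat.card_congr
      exact Equiv.subtypeEquivRight fun x =>
        and_iff_right (Subgroup.mem_centralizer_singleton_iff.mpr
          (Subgroup.mem_center_iff.mp hy.2 x))
    set z := ((Finset.univ.filter fun y : G => pR p y).filter (fun y => y ∈ center G)).card
      with hz
    have hcentsum : ∑ y ∈ (Finset.univ.filter fun y : G => pR p y).filter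
        (fun y => y ∈ center G), Fc p y = z * s := by
      rw [Finset.sum_congr rfl hcent, Finset.sum_const, smul_eq_mul]
    -- z is coprime to p
    have hzp : ¬ p ∣ z := by
      intro hdvd
      set Zp : Subgroup G :=
        { carrier := {y : G | pR p y ∧ y ∈ center G}
          one_mem' := ⟨by simp [pR], Subgroup.one_mem _⟩
          mul_mem' := by
            rintro x y ⟨hx1, hx2⟩ ⟨hy1, hy2⟩
            exact ⟨pR_mul (Subgroup.mem_center_iff.mp hy2 x) hx1 hy1, mul_mem hx2 hy2⟩
          inv_mem' := by rintro x ⟨h1, h2⟩; exact ⟨pR_inv h1, inv_mem h2⟩ } with hZp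
      have hzcard : z = Fintype.card Zp := by
        rw [hz, Fintype.card_subtype, Finset.filter_filter]
        congr 1
        ext y
        simp [hZp, Subgroup.mem_mk, Set.mem_setOf_eq]
      haveI : Fact p.Prime := ⟨hp⟩
      obtain ⟨u, hu⟩ := exists_prime_orderOf_dvd_card (G := Zp) p (hzcard ▸ hdvd)
      have hord : orderOf (u : G) = p := by rw [Subgroup.orderOf_coe, hu]
      have hpR : pR p (u : G) := u.2.1
      rw [pR, hord] at hpR
      exact hp.one_lt.ne' ((Nat.coprime_self p).mp hpR)
    -- noncentral part
    have hnc : p ^ a ∣ ∑ y ∈ (Finset.univ.filter fun y : G => pR p y).filter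
        (fun y => ¬ y ∈ center G), Fc p y := by
      apply dvd_sum_conjInv a _ _ le_rfl
      · intro y hy g
        simp only [Finset.mem_filter, Finset.mem_univ, true_and] at hy ⊢
        refine ⟨?_, fun hmem => hy.2 ?_⟩
        · rw [pR] at hy ⊢
          rw [show orderOf (g * y * g⁻¹) = orderOf y from
            (SemiconjBy.orderOf_eq g (by unfold SemiconjBy; group)).symm]
          exact hy.1
        · have h2 := (Subgroup.Normal.conj_mem inferInstance _ hmem g⁻¹ :
            g⁻¹ * (g * y * g⁻¹) * g⁻¹⁻¹ ∈ center G)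
          simpa [mul_assoc] using h2
      · intro y hy
        simp only [Finset.mem_filter, Finset.mem_univ, true_and] at hy
        set C := centralizer ({y} : Set G) with hC
        have hCne : C ≠ ⊤ := by
          intro hCtop
          exact hy.2 (Subgroup.mem_center_iff.mpr fun g =>
            Subgroup.mem_centralizer_singleton_iff.mp
              (show g ∈ C by rw [hCtop]; exact Subgroup.mem_top g))
        have hlt : Nat.card C < Nat.card G := by
          have h1 : Nat.card C * C.index = Nat.card G := Subgroup.card_mul_index C
          have h2 : 1 < C.index := Subgroup.one_lt_index_of_ne_top hCne
          have h3 : 0 < Nat.card C := Nat.card_pos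
          have h4 := (lt_mul_iff_one_lt_right h3).mpr h2
          rwa [h1] at h4
        have hIH := IH C (by omega)
        set c := (Nat.card C).factorization p with hc
        have hFc : Fc p y = Nat.card {x : C | x ^ p ^ c = 1} := by
          apply Nat.card_congr
          refine ((Equiv.subtypeSubtypeEquivSubtypeInter (· ∈ C) (pE p)).symm.trans ?_)
          refine Equiv.subtypeEquivRight fun x => ?_
          rw [pE_coe, pE_iff_pow_card hp]
          rfl
        have e4 : C ≃ stabilizer (ConjAct G) y := by
          refine Equiv.subtypeEquiv ConjAct.toConjAct.toEquiv fun x => ?_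
          rw [hC, Subgroup.centralizer_eq_comap_stabilizer]
          rfl
        have horb : Nat.card (orbit (ConjAct G) y) * Nat.card C = Nat.card G := by
          rw [Nat.card_congr e4]
          rw [Nat.card_eq_fintype_card, Nat.card_eq_fintype_card, Nat.card_eq_fintype_card]
          exact MulAction.card_orbit_mul_card_stabilizer_eq_card_group (ConjAct G) y
        have hKne : Nat.card (orbit (ConjAct G) y) ≠ 0 := by
          haveI : Nonempty (orbit (ConjAct G) y) := ⟨⟨y, mem_orbit_self y⟩⟩
          exact Nat.card_pos.ne'
        have hCne0 : Nat.card C ≠ 0 := Nat.card_pos.ne'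
        have hfac : a = (Nat.card (orbit (ConjAct G) y)).factorization p + c := by
          rw [ha, ← horb, Nat.factorization_mul hKne hCne0]
          simp [hc]
        rw [hfac, pow_add]
        exact mul_dvd_mul (Nat.ordProj_dvd _ p) (hFc ▸ hIH)
    -- assemble
    have hGsum : Nat.card G = z * s + ∑ y ∈ (Finset.univ.filter fun y : G => pR p y).filter
        (fun y => ¬ y ∈ center G), Fc p y := by
      rw [Nat.card_eq_fintype_card, hdec, ← hsub, ← hsplit, hcentsum]
    have hdvdG : p ^ a ∣ Nat.card G := Nat.ordProj_dvd _ p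
    rw [hGsum] at hdvdG
    have hzs : p ^ a ∣ z * s := (Nat.dvd_add_left hnc).mp hdvdG
    have hcop : Nat.Coprime (p ^ a) z :=
      Nat.Coprime.pow_left a ((Nat.Prime.coprime_iff_not_dvd hp).mpr hzp)
    exact hcop.dvd_of_dvd_mul_left hzs

end FrobeniusPSingular

/-- For a finite group `G` and prime `p`, the `p`-part `|G|_p` of the order of `G`
divides the number of `p`-singular elements, i.e. elements `g` with `g ^ |G|_p = 1`. -/
theorem pPart_dvd_card_pSingular (G : Type*) [Group G] [Finite G] (p : ℕ)
    (hp : p.Prime) :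
    p ^ ((Nat.card G).factorization p) ∣
      Nat.card {g : G | g ^ (p ^ ((Nat.card G).factorization p)) = 1} :=
  FrobeniusPSingular.aux p hp (Nat.card G) G le_rfl
end

section
/- Let K = GL(n, F_q) where q is a power of the prime p. Then the number of p-singular elements of K equals |K|_p^2, the square of the p-part of the order of K. -/
set_option linter.unusedSectionVars false
set_option linter.unusedVariables false
set_option maxHeartbeats 1000000
open LinearMap Module Submodule

open Finset

/-- Sum 0+1+...+(m-1). -/
def EEaux (m : ℕ) : ℕ := ∑ i ∈ Finset.range m, i

/-- Product of (q^i - 1) for i = 1..m. -/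
def PPaux (q m : ℕ) : ℕ := ∏ i ∈ Finset.range m, (q ^ (i + 1) - 1)

/-- Order of GL_m(F_q), in factored form. -/
def ggaux (q m : ℕ) : ℕ := q ^ (EEaux m) * PPaux q m

lemma EEaux_succ (m : ℕ) : EEaux (m + 1) = EEaux m + m := Finset.sum_range_succ _ _

lemma two_EEaux (m : ℕ) : 2 * EEaux m = m * (m - 1) := by
  have := Finset.sum_range_id_mul_two m
  unfold EEaux; omega

lemma two_EEaux_add (m : ℕ) : 2 * EEaux m + m = m * m := by
  rcases m with _ | m
  · simp [EEaux]
  · have := two_EEaux (m + 1)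
    simp only [Nat.add_sub_cancel] at this
    rw [this]; ring

lemma PPaux_pos {q : ℕ} (hq : 1 < q) (m : ℕ) : 0 < PPaux q m := by
  apply Finset.prod_pos
  intro i _
  have : 1 < q ^ (i + 1) := Nat.one_lt_pow (by omega) hq
  omega

lemma ggaux_pos {q : ℕ} (hq : 1 < q) (m : ℕ) : 0 < ggaux q m :=
  Nat.mul_pos (Nat.pow_pos (by omega)) (PPaux_pos hq m)

lemma ggaux_zero (q : ℕ) : ggaux q 0 = 1 := by simp [ggaux, EEaux, PPaux]

lemma ggaux_succ (q m : ℕ) : ggaux q (m + 1) = ggaux q m * (q ^ m * (q ^ (m + 1) - 1)) := by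
  unfold ggaux PPaux
  rw [EEaux_succ, pow_add, Finset.prod_range_succ]
  ring

/-- The standard product formula for |GL_m(F_q)| equals the factored form. -/
lemma prod_card_GL_eq_ggaux {q : ℕ} (hq : 1 < q) (m : ℕ) :
    ∏ i : Fin m, (q ^ m - q ^ (i : ℕ)) = ggaux q m := by
  rw [Fin.prod_univ_eq_prod_range (fun i => q ^ m - q ^ i) m]
  have h1 : ∀ i ∈ Finset.range m, q ^ m - q ^ i = q ^ i * (q ^ (m - i) - 1) := by
    intro i hi
    rw [Finset.mem_range] at hi
    rw [Nat.mul_sub, mul_one, ← pow_add]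
    congr 2
    omega
  rw [Finset.prod_congr rfl h1, Finset.prod_mul_distrib]
  unfold ggaux PPaux EEaux
  congr 1
  · rw [Finset.prod_pow_eq_pow_sum]
  · rw [← Finset.prod_range_reflect]
    apply Finset.prod_congr rfl
    intro i hi
    rw [Finset.mem_range] at hi
    congr 2
    omega

/-- Telescoping sum identity in ℚ. -/
lemma ggaux_telescope {q : ℕ} (hq : 1 < q) (m : ℕ) :
    (ggaux q m : ℚ) * ∑ d ∈ Finset.range m, (q : ℚ) ^ (2 * EEaux d) / (ggaux q d : ℚ) =
      (q : ℚ) ^ (2 * EEaux m + m) - (q : ℚ) ^ (2 * EEaux m) := by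
  induction m with
  | zero => simp
  | succ m ih =>
    have hg : (ggaux q m : ℚ) ≠ 0 := by
      exact_mod_cast (ggaux_pos hq m).ne'
    have hq1 : (1 : ℚ) ≤ (q : ℚ) ^ (m + 1) := by
      exact_mod_cast Nat.one_le_pow _ _ (by omega)
    have hgs : (ggaux q (m + 1) : ℚ) =
        (ggaux q m : ℚ) * ((q : ℚ) ^ m * ((q : ℚ) ^ (m + 1) - 1)) := by
      rw [ggaux_succ]
      push_cast [Nat.one_le_pow _ _ (show 0 < q by omega)]
      ring
    rw [Finset.sum_range_succ, mul_add, hgs]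
    calc (ggaux q m : ℚ) * ((q:ℚ) ^ m * ((q:ℚ) ^ (m + 1) - 1)) *
          (∑ d ∈ Finset.range m, (q : ℚ) ^ (2 * EEaux d) / (ggaux q d : ℚ)) +
          (ggaux q m : ℚ) * ((q:ℚ) ^ m * ((q:ℚ) ^ (m + 1) - 1)) * ((q:ℚ) ^ (2 * EEaux m) / (ggaux q m : ℚ))
        = ((q:ℚ) ^ m * ((q:ℚ) ^ (m + 1) - 1)) *
            ((ggaux q m : ℚ) * ∑ d ∈ Finset.range m, (q : ℚ) ^ (2 * EEaux d) / (ggaux q d : ℚ))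
          + ((q:ℚ) ^ m * ((q:ℚ) ^ (m + 1) - 1)) * (q:ℚ) ^ (2 * EEaux m) := by
          field_simp
      _ = (q : ℚ) ^ (2 * EEaux (m+1) + (m+1)) - (q : ℚ) ^ (2 * EEaux (m+1)) := by
          rw [ih]
          have h1 : 2 * EEaux (m+1) + (m+1) = (2 * EEaux m + m) + m + (m+1) := by
            rw [EEaux_succ]; ring
          have h2 : 2 * EEaux (m+1) = (2 * EEaux m) + m + m := by
            rw [EEaux_succ]; ring
          rw [h1, h2]
          rw [show (2 * EEaux m + m) + m + (m+1) = (2*EEaux m + m) + m + (m+1) from rfl]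
          simp only [pow_add]
          ring

section Counting

variable {F : Type*} [Field F] [Fintype F]

/-- number of nilpotent endomorphisms of the model d-dimensional space -/
noncomputable def nuaux (F : Type*) [Field F] [Fintype F] (d : ℕ) : ℕ :=
  Nat.card {g : Module.End F (Fin d → F) // IsNilpotent g}

lemma finite_linearMap {M N : Type*} [AddCommGroup M] [Module F M] [AddCommGroup N]
    [Module F N] [Finite M] [Finite N] : Finite (M →ₗ[F] N) :=
  Finite.of_injective (fun f => (f : M → N)) DFunLike.coe_injective

lemma finite_linearEquiv {M : Type*} [AddCommGroup M] [Module F M] [Finite M] :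
    Finite (M ≃ₗ[F] M) :=
  Finite.of_injective (fun e => (e : M → M))
    (fun a b h => by ext x; exact congrFun h x)

lemma conj_pow' {M N : Type*} [AddCommGroup M] [Module F M] [AddCommGroup N] [Module F N]
    (e : M ≃ₗ[F] N) (g : Module.End F M) (k : ℕ) : e.conj g ^ k = e.conj (g ^ k) := by
  induction k with
  | zero =>
      simp only [pow_zero]
      rw [show (1 : Module.End F M) = LinearMap.id from rfl,
        show (1 : Module.End F N) = LinearMap.id from rfl, LinearEquiv.conj_id]
  | succ k ih =>
      rw [pow_succ, pow_succ, ih]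
      rw [show (e.conj (g ^ k) * e.conj g) = e.conj (g^k) ∘ₗ e.conj g from rfl,
        ← LinearEquiv.conj_comp]
      rfl

lemma isNilpotent_conj_iff {M N : Type*} [AddCommGroup M] [Module F M] [AddCommGroup N]
    [Module F N] (e : M ≃ₗ[F] N) (g : Module.End F M) :
    IsNilpotent (e.conj g) ↔ IsNilpotent g := by
  constructor
  · rintro ⟨k, hk⟩
    rw [conj_pow'] at hk
    exact ⟨k, e.conj.injective (by rw [hk, map_zero])⟩
  · rintro ⟨k, hk⟩
    exact ⟨k, by rw [conj_pow', hk, map_zero]⟩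

/-- Transport: the number of nilpotent endomorphisms only depends on the dimension. -/
lemma card_nilpotent_end {U : Type*} [AddCommGroup U] [Module F U] [FiniteDimensional F U] :
    Nat.card {g : Module.End F U // IsNilpotent g} = nuaux F (finrank F U) := by
  obtain ⟨e⟩ := FiniteDimensional.nonempty_linearEquiv_of_finrank_eq
    (show finrank F U = finrank F (Fin (finrank F U) → F) by
      simp [Module.finrank_fintype_fun_eq_card])
  exact Nat.card_congr (Equiv.subtypeEquiv e.conj.toEquiv
    (fun g => (isNilpotent_conj_iff e g).symm))

/-- congruence of automorphism groups -/
def lequivCongr {M N : Type*} [AddCommGroup M] [Module F M] [AddCommGroup N] [Module F N]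
    (e : M ≃ₗ[F] N) : (M ≃ₗ[F] M) ≃ (N ≃ₗ[F] N) where
  toFun h := (e.symm.trans h).trans e
  invFun h := (e.trans h).trans e.symm
  left_inv h := by ext x; simp
  right_inv h := by ext x; simp

lemma card_aut {U : Type*} [AddCommGroup U] [Module F U] [FiniteDimensional F U] :
    Nat.card (U ≃ₗ[F] U) =
      ∏ i : Fin (finrank F U), (Fintype.card F ^ (finrank F U) - Fintype.card F ^ (i : ℕ)) := by
  obtain ⟨e⟩ := FiniteDimensional.nonempty_linearEquiv_of_finrank_eq
    (show finrank F U = finrank F (Fin (finrank F U) → F) by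
      simp [Module.finrank_fintype_fun_eq_card])
  rw [Nat.card_congr (lequivCongr e)]
  rw [Nat.card_congr ((Matrix.GeneralLinearGroup.toLin.trans
    (LinearMap.GeneralLinearGroup.generalLinearEquiv F
      (Fin (finrank F U) → F))).toEquiv).symm]
  exact Matrix.card_GL_field _

lemma card_end (n : ℕ) :
    Nat.card (Module.End F (Fin n → F)) = Fintype.card F ^ (n * n) := by
  rw [Nat.card_congr (LinearMap.toMatrixAlgEquiv' (R := F) (n := Fin n)).toEquiv]
  rw [Nat.card_eq_fintype_card]
  show Fintype.card (Fin n → Fin n → F) = _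
  rw [Fintype.card_fun, Fintype.card_fun, Fintype.card_fin, ← pow_mul, mul_comm]

end Counting

section Fitting

variable {F : Type*} [Field F] {V : Type*} [AddCommGroup V] [Module F V]

variable (F V) in
/-- pairs of complementary submodules -/
abbrev CPd := {c : Submodule F V × Submodule F V // IsCompl c.1 c.2}

variable (F) in
/-- a nilpotent endomorphism of the first factor and an automorphism of the second -/
abbrev FitPkg (c : CPd F V) :=
  {g : Module.End F c.1.1 // IsNilpotent g} × ((c.1.2 : Submodule F V) ≃ₗ[F] c.1.2)

/-- Reassembling an endomorphism from its Fitting data. -/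
noncomputable def phiFit (a : Σ c : CPd F V, FitPkg F c) : Module.End F V :=
  a.1.1.1.subtype ∘ₗ ((a.2.1.1 : Module.End F a.1.1.1) ∘ₗ
      a.1.1.1.linearProjOfIsCompl a.1.1.2 a.1.2) +
  a.1.1.2.subtype ∘ₗ ((a.2.2 : a.1.1.2 →ₗ[F] a.1.1.2) ∘ₗ
      a.1.1.2.linearProjOfIsCompl a.1.1.1 a.1.2.symm)

lemma phiFit_apply (c : CPd F V) (x : FitPkg F c) (u : c.1.1) (w : c.1.2) :
    phiFit ⟨c, x⟩ ((u : V) + (w : V)) = (x.1.1 u : V) + (x.2 w : V) := by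
  simp [phiFit, Submodule.linearProjOfIsCompl, map_add, Submodule.projectionOnto_apply_left,
    Submodule.projectionOnto_apply_right]

lemma phiFit_pow (c : CPd F V) (x : FitPkg F c) (k : ℕ) (u : c.1.1) (w : c.1.2) :
    (phiFit ⟨c, x⟩ ^ k) ((u : V) + (w : V)) = ((x.1.1 ^ k) u : V) + ((x.2 ^ k) w : V) := by
  induction k with
  | zero => simp
  | succ k ih =>
      rw [pow_succ', Module.End.mul_apply, ih,
        phiFit_apply c x ((x.1.1 ^ k) u) ((x.2 ^ k) w),
        pow_succ' x.1.1 k, Module.End.mul_apply]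
      congr 2
      rw [LinearEquiv.pow_apply, LinearEquiv.pow_apply, Function.iterate_succ_apply']

lemma phiFit_recover (a : Σ c : CPd F V, FitPkg F c) :
    (⨆ k, LinearMap.ker (phiFit a ^ k)) = a.1.1.1 ∧
      (⨅ k, LinearMap.range (phiFit a ^ k)) = a.1.1.2 := by
  obtain ⟨c, x⟩ := a
  obtain ⟨N, hN⟩ := x.1.2
  have hdecomp : ∀ v : V,
      ((c.1.1.linearProjOfIsCompl c.1.2 c.2) v : V) +
        ((c.1.2.linearProjOfIsCompl c.1.1 c.2.symm) v : V) = v :=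
    fun v => Submodule.projection_add_projection_eq_self c.2 v
  have hkerle : ∀ k, LinearMap.ker (phiFit ⟨c, x⟩ ^ k) ≤ c.1.1 := by
    intro k v hv
    rw [LinearMap.mem_ker] at hv
    set u := (c.1.1.linearProjOfIsCompl c.1.2 c.2) v with hu
    set w := (c.1.2.linearProjOfIsCompl c.1.1 c.2.symm) v with hw
    rw [← hdecomp v, phiFit_pow] at hv
    -- sum of element of U and element of W is 0
    have h1 : ((x.2 ^ k) w : V) = -(((x.1.1 ^ k) u : V)) := eq_neg_of_add_eq_zero_right hv
    have h2 : ((x.2 ^ k) w : V) ∈ c.1.1 := h1 ▸ neg_mem ((x.1.1 ^ k) u).2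
    have h3 : ((x.2 ^ k) w : V) = 0 :=
      Submodule.disjoint_def.mp c.2.disjoint _ h2 ((x.2 ^ k) w).2
    have hwz : w = (0 : c.1.2) := (x.2 ^ k).injective (by rw [map_zero]; exact Subtype.ext h3)
    have hv' : v = (u : V) + (w : V) := (hdecomp v).symm
    rw [hv', hwz]
    simpa using u.2
  have hUle : c.1.1 ≤ LinearMap.ker (phiFit ⟨c, x⟩ ^ N) := by
    intro v hv
    rw [LinearMap.mem_ker]
    have : v = ((⟨v, hv⟩ : c.1.1) : V) + ((0 : c.1.2) : V) := by simp
    rw [this, phiFit_pow, hN]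
    simp
  have hrangele : LinearMap.range (phiFit ⟨c, x⟩ ^ N) ≤ c.1.2 := by
    rintro y ⟨v, rfl⟩
    rw [← hdecomp v, phiFit_pow, hN]
    simpa using ((x.2 ^ N) _).2
  have hWle : ∀ k, c.1.2 ≤ LinearMap.range (phiFit ⟨c, x⟩ ^ k) := by
    intro k w hw
    refine ⟨((0 : c.1.1) : V) + (((x.2 ^ k).symm ⟨w, hw⟩ : c.1.2) : V), ?_⟩
    rw [show ((0 : c.1.1) : V) + (((x.2 ^ k).symm ⟨w, hw⟩ : c.1.2) : V) =
      ((0 : c.1.1) : V) + (((x.2 ^ k).symm ⟨w, hw⟩ : c.1.2) : V) from rfl, phiFit_pow]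
    simp
  constructor
  · exact le_antisymm (iSup_le hkerle) (le_trans hUle (le_iSup (fun k => LinearMap.ker (phiFit ⟨c, x⟩ ^ k)) N))
  · exact le_antisymm (iInf_le_of_le N hrangele) (le_iInf hWle)

lemma phiFit_injective : Function.Injective (phiFit (F := F) (V := V)) := by
  rintro ⟨⟨⟨U, W⟩, hc⟩, ⟨g, hg⟩, h⟩ ⟨⟨⟨U', W'⟩, hc'⟩, ⟨g', hg'⟩, h'⟩ heq
  have h1 := phiFit_recover ⟨⟨⟨U, W⟩, hc⟩, ⟨g, hg⟩, h⟩
  have h2 := phiFit_recover ⟨⟨⟨U', W'⟩, hc'⟩, ⟨g', hg'⟩, h'⟩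
  rw [heq] at h1
  obtain ⟨hU, hW⟩ : U = U' ∧ W = W' :=
    ⟨h1.1.symm.trans h2.1, h1.2.symm.trans h2.2⟩
  subst hU; subst hW
  have hgg : g = g' := by
    ext u
    have e1 : phiFit ⟨⟨⟨U, W⟩, hc⟩, ⟨g, hg⟩, h⟩ ((u : V) + ((0 : W) : V)) = (g u : V) := by
      rw [phiFit_apply]; simp
    have e2 : phiFit ⟨⟨⟨U, W⟩, hc'⟩, ⟨g', hg'⟩, h'⟩ ((u : V) + ((0 : W) : V)) = (g' u : V) := by
      rw [phiFit_apply]; simp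
    rw [heq] at e1
    rw [e2] at e1
    first
    | exact e1.symm
    | exact Subtype.ext e1.symm
  have hhh : h = h' := by
    ext w
    have e1 : phiFit ⟨⟨⟨U, W⟩, hc⟩, ⟨g, hg⟩, h⟩ (((0 : U) : V) + (w : V)) = (h w : V) := by
      rw [phiFit_apply]; simp
    have e2 : phiFit ⟨⟨⟨U, W⟩, hc'⟩, ⟨g', hg'⟩, h'⟩ (((0 : U) : V) + (w : V)) = (h' w : V) := by
      rw [phiFit_apply]; simp
    rw [heq, e2] at e1
    first
    | exact e1.symm
    | exact Subtype.ext e1.symm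
  have hcc : hc = hc' := Subsingleton.elim _ _
  subst hcc
  have hgg' : (⟨g, hg⟩ : {g : Module.End F (⟨(U, W), hc⟩ : CPd F V).1.1 // IsNilpotent g}) = ⟨g', hg'⟩ :=
    Subtype.ext hgg
  rw [Sigma.mk.inj_iff]
  exact ⟨rfl, by rw [heq_iff_eq, Prod.mk.injEq]; exact ⟨hgg', hhh⟩⟩

variable [FiniteDimensional F V]

lemma phiFit_surjective : Function.Surjective (phiFit (F := F) (V := V)) := by
  intro f
  obtain ⟨m0, hm⟩ := Filter.eventually_atTop.mp
    ((f.eventually_iSup_ker_pow_eq).and (f.eventually_iInf_range_pow_eq))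
  set m := m0 + 1 with hmdef
  obtain ⟨hker, hrange⟩ := hm m (by omega)
  obtain ⟨-, hrange'⟩ := hm (m + 1) (by omega)
  set U := LinearMap.ker (f ^ m) with hUdef
  set W := LinearMap.range (f ^ m) with hWdef
  have hc : IsCompl U W := by
    have := f.isCompl_iSup_ker_pow_iInf_range_pow
    rwa [hker, hrange] at this
  have hU : ∀ x ∈ U, f x ∈ U := by
    intro x hx
    rw [hUdef, LinearMap.mem_ker] at hx ⊢
    have : (f ^ m) (f x) = f ((f ^ m) x) := by
      rw [← Module.End.mul_apply, ← Module.End.mul_apply, ← pow_succ, ← pow_succ']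
    rw [this, hx, map_zero]
  have hW : ∀ x ∈ W, f x ∈ W := by
    rintro x ⟨y, rfl⟩
    exact ⟨f y, by rw [← Module.End.mul_apply, ← Module.End.mul_apply, ← pow_succ, ← pow_succ']⟩
  set g := f.restrict hU with hgdef
  have hgnil : IsNilpotent g := by
    refine ⟨m, ?_⟩
    rw [hgdef, Module.End.pow_restrict m hU]
    ext x
    have hx : (f ^ m) (x : V) = 0 := x.2
    simp [LinearMap.restrict_apply, hx]
  set h0 := f.restrict hW with hh0def
  have hinj : Function.Injective h0 := by
    rw [← LinearMap.ker_eq_bot, LinearMap.ker_eq_bot']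
    intro x hx0
    have hfx : f (x : V) = 0 := congrArg Subtype.val hx0
    have hxU : (x : V) ∈ U := by
      rw [hUdef, LinearMap.mem_ker, hmdef, pow_succ, Module.End.mul_apply, hfx, map_zero]
    exact Subtype.ext (Submodule.disjoint_def.mp hc.disjoint _ hxU x.2)
  have hsurj : Function.Surjective h0 := by
    rintro ⟨y, hy⟩
    have hy' : y ∈ LinearMap.range (f ^ (m + 1)) := by
      rw [← hrange', hrange]; exact hy
    obtain ⟨z, hz⟩ := hy'
    refine ⟨⟨(f ^ m) z, LinearMap.mem_range_self _ _⟩, ?_⟩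
    apply Subtype.ext
    show f ((f ^ m) z) = y
    rw [← Module.End.mul_apply, ← pow_succ']
    exact hz
  refine ⟨⟨⟨(U, W), hc⟩, ⟨g, hgnil⟩, LinearEquiv.ofBijective h0 ⟨hinj, hsurj⟩⟩, ?_⟩
  ext v
  have hdecomp : ((U.linearProjOfIsCompl W hc) v : V) + ((W.linearProjOfIsCompl U hc.symm) v : V) = v :=
    Submodule.projection_add_projection_eq_self hc v
  set u := (U.linearProjOfIsCompl W hc) v
  set w := (W.linearProjOfIsCompl U hc.symm) v
  calc phiFit ⟨⟨(U, W), hc⟩, ⟨g, hgnil⟩, LinearEquiv.ofBijective h0 ⟨hinj, hsurj⟩⟩ v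
      = phiFit ⟨⟨(U, W), hc⟩, ⟨g, hgnil⟩, LinearEquiv.ofBijective h0 ⟨hinj, hsurj⟩⟩
        ((u : V) + (w : V)) := by rw [hdecomp]
    _ = (g u : V) + (h0 w : V) := by
        rw [phiFit_apply]
        rfl
    _ = f (u : V) + f (w : V) := rfl
    _ = f ((u : V) + (w : V)) := by rw [map_add]
    _ = f v := by rw [hdecomp]

/-- The Fitting decomposition as a bijection. -/
lemma card_end_eq_card_sigma :
    Nat.card (Module.End F V) = Nat.card (Σ c : CPd F V, FitPkg F c) :=
  (Nat.card_congr (Equiv.ofBijective _ ⟨phiFit_injective, phiFit_surjective⟩)).symm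

end Fitting


section Theta

variable {F : Type*} [Field F] [Fintype F] {V : Type*} [AddCommGroup V] [Module F V]
  [FiniteDimensional F V]

local notation "q" => Fintype.card F
local notation "n" => finrank F V

variable (F V) in
/-- complementary pairs with first component of dimension d -/
abbrev CPdim (d : ℕ) := {c : CPd F V // finrank F c.1.1 = d}

variable (F V) in
/-- split linearly independent data -/
abbrev SplitLI (d : ℕ) :=
  Σ c : CPdim F V d, {t : Fin d → c.1.1.1 // LinearIndependent F t} ×
    {t : Fin (n - d) → c.1.1.2 // LinearIndependent F t}

/-- from split data to a linearly independent family -/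
def thetaMap (d : ℕ) (a : SplitLI F V d) :
    {s : Fin d ⊕ Fin (n - d) → V // LinearIndependent F s} := by
  refine ⟨Sum.elim (fun i => (a.2.1.1 i : V)) (fun j => (a.2.2.1 j : V)), ?_⟩
  rw [linearIndependent_sum]
  refine ⟨?_, ?_, ?_⟩
  · exact a.2.1.2.map' a.1.1.1.1.subtype (ker_subtype _)
  · exact a.2.2.2.map' a.1.1.1.2.subtype (ker_subtype _)
  · apply Disjoint.mono _ _ a.1.1.2.disjoint
    · rw [Submodule.span_le]
      rintro y ⟨i, rfl⟩
      exact (a.2.1.1 i).2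
    · rw [Submodule.span_le]
      rintro y ⟨i, rfl⟩
      exact (a.2.2.1 i).2

lemma span_fst (d : ℕ) (a : SplitLI F V d) :
    span F (Set.range (fun i => (a.2.1.1 i : V))) = a.1.1.1.1 := by
  have h1 : (fun i => (a.2.1.1 i : V)) = a.1.1.1.1.subtype ∘ a.2.1.1 := rfl
  rw [h1, Set.range_comp, Submodule.span_image]
  have h2 : span F (Set.range a.2.1.1) = ⊤ := by
    apply Submodule.eq_top_of_finrank_eq
    rw [finrank_span_eq_card a.2.1.2, Fintype.card_fin, a.1.2]
  rw [h2, Submodule.map_subtype_top]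

lemma span_snd (d : ℕ) (hd : d ≤ n) (a : SplitLI F V d) :
    span F (Set.range (fun j => (a.2.2.1 j : V))) = a.1.1.1.2 := by
  have h1 : (fun j => (a.2.2.1 j : V)) = a.1.1.1.2.subtype ∘ a.2.2.1 := rfl
  rw [h1, Set.range_comp, Submodule.span_image]
  have hW : finrank F a.1.1.1.2 = n - d := by
    have := Submodule.finrank_add_eq_of_isCompl a.1.1.2
    have h2 := a.1.2
    omega
  have h2 : span F (Set.range a.2.2.1) = ⊤ := by
    apply Submodule.eq_top_of_finrank_eq
    rw [finrank_span_eq_card a.2.2.2, Fintype.card_fin, hW]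
  rw [h2, Submodule.map_subtype_top]

lemma thetaMap_injective (d : ℕ) (hd : d ≤ n) : Function.Injective (thetaMap (F := F) (V := V) d) := by
  intro a b heq
  have hval := congrArg Subtype.val heq
  have hinl : ∀ i, (a.2.1.1 i : V) = (b.2.1.1 i : V) := fun i => congrFun hval (Sum.inl i)
  have hinr : ∀ j, (a.2.2.1 j : V) = (b.2.2.1 j : V) := fun j => congrFun hval (Sum.inr j)
  have hU : a.1.1.1.1 = b.1.1.1.1 := by
    rw [← span_fst d a, ← span_fst d b]
    congr 1
    exact congrArg Set.range (funext hinl)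
  have hW : a.1.1.1.2 = b.1.1.1.2 := by
    rw [← span_snd d hd a, ← span_snd d hd b]
    congr 1
    exact congrArg Set.range (funext hinr)
  obtain ⟨⟨⟨⟨U, W⟩, hc⟩, hdim⟩, ⟨t₁, h₁⟩, ⟨t₂, h₂⟩⟩ := a
  obtain ⟨⟨⟨⟨U', W'⟩, hc'⟩, hdim'⟩, ⟨t₁', h₁'⟩, ⟨t₂', h₂'⟩⟩ := b
  simp only at hU hW hinl hinr
  subst hU; subst hW
  have hcc : hc = hc' := Subsingleton.elim _ _
  subst hcc
  have hdd : hdim = hdim' := Subsingleton.elim _ _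
  subst hdd
  have ht1 : t₁ = t₁' := funext fun i => Subtype.ext (hinl i)
  have ht2 : t₂ = t₂' := funext fun j => Subtype.ext (hinr j)
  subst ht1; subst ht2
  rfl

lemma thetaMap_surjective (d : ℕ) (hd : d ≤ n) :
    Function.Surjective (thetaMap (F := F) (V := V) d) := by
  rintro ⟨s, hs⟩
  obtain ⟨hs1, hs2, hdisj⟩ := linearIndependent_sum.mp hs
  set U := span F (Set.range (s ∘ Sum.inl)) with hUdef
  set W := span F (Set.range (s ∘ Sum.inr)) with hWdef
  have hcodis : U ⊔ W = ⊤ := by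
    rw [hUdef, hWdef, ← Submodule.span_union, ← Sum.range_eq]
    apply Submodule.eq_top_of_finrank_eq
    rw [finrank_span_eq_card hs]
    simp only [Fintype.card_sum, Fintype.card_fin]
    omega
  have hc : IsCompl U W := ⟨hdisj, codisjoint_iff.mpr hcodis⟩
  have hdim : finrank F U = d := by
    rw [hUdef, finrank_span_eq_card hs1, Fintype.card_fin]
  refine ⟨⟨⟨⟨(U, W), hc⟩, hdim⟩,
    ⟨fun i => ⟨s (Sum.inl i), subset_span ⟨i, rfl⟩⟩, ?_⟩,
    ⟨fun j => ⟨s (Sum.inr j), subset_span ⟨j, rfl⟩⟩, ?_⟩⟩, ?_⟩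
  · exact LinearIndependent.of_comp U.subtype hs1
  · exact LinearIndependent.of_comp W.subtype hs2
  · apply Subtype.ext
    funext i
    cases i <;> rfl

end Theta

def liReindex {F : Type*} [Field F] {V : Type*} [AddCommGroup V] [Module F V]
    {ι ι' : Type*} (e : ι ≃ ι') :
    {s : ι → V // LinearIndependent F s} ≃ {s : ι' → V // LinearIndependent F s} :=
  Equiv.subtypeEquiv (Equiv.arrowCongr e (Equiv.refl V)) (fun s => by
    have h := linearIndependent_equiv (R := F) (M := V) e.symm (f := s)
    simpa [Equiv.arrowCongr] using h.symm)

section Cards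

variable {F : Type*} [Field F] [Fintype F] {V : Type*} [AddCommGroup V] [Module F V]
  [FiniteDimensional F V]

local notation "q" => Fintype.card F
local notation "n" => finrank F V

lemma card_li_subtype_eq {U : Type*} [AddCommGroup U] [Module F U] [FiniteDimensional F U]
    (k : ℕ) (hk : finrank F U = k) :
    Nat.card {t : Fin k → U // LinearIndependent F t} = ggaux q k := by
  haveI : Finite U := Module.finite_of_finite F
  rw [card_linearIndependent (le_of_eq hk.symm), hk]
  exact prod_card_GL_eq_ggaux Fintype.one_lt_card k

/-- the relation `C_d · g_d · g_{n-d} = g_n` -/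
lemma crel (d : ℕ) (hd : d ≤ n) :
    Nat.card (CPdim F V d) * (ggaux q d * ggaux q (n - d)) = ggaux q n := by
  classical
  haveI : Finite V := Module.finite_of_finite F
  haveI : Fintype (CPdim F V d) := Fintype.ofFinite _
  -- RHS : count of linearly independent families
  have hRHS : Nat.card {s : Fin n → V // LinearIndependent F s} = ggaux q n :=
    card_li_subtype_eq n rfl
  -- reindex
  have e1 : {s : Fin n → V // LinearIndependent F s} ≃
      {s : Fin d ⊕ Fin (n - d) → V // LinearIndependent F s} :=
    liReindex ((finCongr (by omega : n = d + (n - d))).trans finSumFinEquiv.symm)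
  -- theta
  have e2 : SplitLI F V d ≃ {s : Fin d ⊕ Fin (n - d) → V // LinearIndependent F s} :=
    Equiv.ofBijective _ ⟨thetaMap_injective d hd, thetaMap_surjective d hd⟩
  have key : Nat.card (SplitLI F V d) = ggaux q n := by
    rw [Nat.card_congr (e2.trans e1.symm), hRHS]
  -- sum over the sigma
  haveI : ∀ c : CPdim F V d, Fintype ({t : Fin d → c.1.1.1 // LinearIndependent F t} ×
      {t : Fin (n - d) → c.1.1.2 // LinearIndependent F t}) := fun c => Fintype.ofFinite _
  rw [Nat.card_eq_fintype_card, Fintype.card_sigma] at key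
  have hterm : ∀ c : CPdim F V d,
      Fintype.card ({t : Fin d → c.1.1.1 // LinearIndependent F t} ×
        {t : Fin (n - d) → c.1.1.2 // LinearIndependent F t}) = ggaux q d * ggaux q (n - d) := by
    intro c
    have hW : finrank F c.1.1.2 = n - d := by
      have := Submodule.finrank_add_eq_of_isCompl c.1.2
      have := c.2
      omega
    rw [← Nat.card_eq_fintype_card, Nat.card_prod,
      card_li_subtype_eq d c.2, card_li_subtype_eq (n - d) hW]
  rw [Finset.sum_congr rfl (fun c _ => hterm c), Finset.sum_const, smul_eq_mul,
    Finset.card_univ, ← Nat.card_eq_fintype_card] at key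
  exact key

/-- the master counting identity from the Fitting decomposition -/
lemma master :
    q ^ (n * n) = ∑ d ∈ Finset.range (n + 1),
      Nat.card (CPdim F V d) * (nuaux F d * ggaux q (n - d)) := by
  classical
  haveI : Finite V := Module.finite_of_finite F
  haveI : Fintype (CPd F V) := Fintype.ofFinite _
  haveI : ∀ c : CPd F V, Fintype (FitPkg F c) := fun c => by
    haveI : Finite (Module.End F c.1.1) := finite_linearMap
    haveI : Finite ((c.1.2 : Submodule F V) ≃ₗ[F] c.1.2) := finite_linearEquiv
    exact Fintype.ofFinite _
  -- card of End V
  have hEnd : Nat.card (Module.End F V) = q ^ (n * n) := by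
    obtain ⟨e⟩ := FiniteDimensional.nonempty_linearEquiv_of_finrank_eq
      (show finrank F V = finrank F (Fin n → F) by
        simp [Module.finrank_fintype_fun_eq_card])
    rw [Nat.card_congr e.conj.toEquiv, card_end]
  rw [← hEnd, card_end_eq_card_sigma, Nat.card_eq_fintype_card, Fintype.card_sigma]
  have hterm : ∀ c : CPd F V,
      Fintype.card (FitPkg F c) = nuaux F (finrank F c.1.1) * ggaux q (n - finrank F c.1.1) := by
    intro c
    have hW : finrank F c.1.2 = n - finrank F c.1.1 := by
      have := Submodule.finrank_add_eq_of_isCompl c.2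
      omega
    rw [← Nat.card_eq_fintype_card, Nat.card_prod, card_nilpotent_end]
    congr 1
    rw [card_aut, hW]
    exact prod_card_GL_eq_ggaux Fintype.one_lt_card _
  rw [Finset.sum_congr rfl (fun c _ => hterm c)]
  rw [show (∑ c : CPd F V, nuaux F (finrank F c.1.1) * ggaux q (n - finrank F c.1.1)) =
      ∑ d ∈ Finset.range (n + 1), ∑ c ∈ Finset.filter
        (fun c : CPd F V => finrank F c.1.1 = d) Finset.univ,
        nuaux F (finrank F c.1.1) * ggaux q (n - finrank F c.1.1) from
    (Finset.sum_fiberwise_of_maps_to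
      (fun c _ => Finset.mem_range.mpr (Nat.lt_succ_of_le (Submodule.finrank_le c.1.1)))
      _).symm]
  apply Finset.sum_congr rfl
  intro d hd
  have : ∀ c ∈ Finset.filter (fun c : CPd F V => finrank F c.1.1 = d) Finset.univ,
      nuaux F (finrank F c.1.1) * ggaux q (n - finrank F c.1.1) =
        nuaux F d * ggaux q (n - d) := by
    intro c hc
    rw [Finset.mem_filter] at hc
    rw [hc.2]
  rw [Finset.sum_congr rfl this, Finset.sum_const, smul_eq_mul]
  congr 1
  rw [Nat.card_eq_fintype_card, Fintype.card_subtype]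

end Cards
section Induction

variable {F : Type*} [Field F] [Fintype F]

local notation "q" => Fintype.card F

lemma nuaux_eq (n : ℕ) : nuaux F n = q ^ (2 * EEaux n) := by
  induction n using Nat.strong_induction_on with
  | _ n ih =>
  have hq : 1 < q := Fintype.one_lt_card
  have hn : finrank F (Fin n → F) = n := by
    simp [Module.finrank_fintype_fun_eq_card]
  have hM := master (F := F) (V := Fin n → F)
  rw [hn] at hM
  let C : ℕ → ℕ := fun d => Nat.card (CPdim F (Fin n → F) d)
  have hcrel : ∀ d, d ≤ n → C d * (ggaux q d * ggaux q (n - d)) = ggaux q n := by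
    intro d hd
    have h := crel (F := F) (V := Fin n → F) d (by rw [hn]; exact hd)
    rw [hn] at h
    exact h
  have hgne : ∀ m, ((ggaux q m : ℚ)) ≠ 0 := fun m => by
    exact_mod_cast (ggaux_pos hq m).ne'
  have hCn : C n = 1 := by
    have h := hcrel n le_rfl
    rw [Nat.sub_self, ggaux_zero, mul_one] at h
    exact Nat.eq_of_mul_eq_mul_right (ggaux_pos hq n) (by rw [h, one_mul])
  have hMQ := congrArg (fun k : ℕ => (k : ℚ)) hM
  push_cast at hMQ
  rw [Finset.sum_range_succ, show Nat.card (CPdim F (Fin n → F) n) = 1 from hCn, Nat.sub_self, ggaux_zero] at hMQ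
  push_cast at hMQ
  have hterm : ∀ d ∈ Finset.range n,
      (Nat.card (CPdim F (Fin n → F) d) : ℚ) * ((nuaux F d : ℚ) * (ggaux q (n - d) : ℚ)) =
        (ggaux q n : ℚ) * ((q : ℚ) ^ (2 * EEaux d) / (ggaux q d : ℚ)) := by
    intro d hd
    rw [Finset.mem_range] at hd
    rw [ih d hd]
    have h := hcrel d (le_of_lt hd)
    have hQ : (Nat.card (CPdim F (Fin n → F) d) : ℚ) * ((ggaux q d : ℚ) * (ggaux q (n - d) : ℚ)) = (ggaux q n : ℚ) := by
      exact_mod_cast h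
    rw [← mul_div_assoc, eq_div_iff (hgne d)]
    push_cast
    linear_combination ((q : ℚ) ^ (2 * EEaux d)) * hQ
  rw [Finset.sum_congr rfl hterm, ← Finset.mul_sum, ggaux_telescope hq n] at hMQ
  have h2 : ((q : ℚ)) ^ (n * n) = (q : ℚ) ^ (2 * EEaux n + n) := by rw [two_EEaux_add]
  rw [h2] at hMQ
  have hfin : (nuaux F n : ℚ) = (q : ℚ) ^ (2 * EEaux n) := by linarith
  exact_mod_cast hfin

lemma card_nilpotent_matrix (n : ℕ) :
    Nat.card {A : Matrix (Fin n) (Fin n) F // IsNilpotent A} = q ^ (2 * EEaux n) := by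
  have e : {g : Module.End F (Fin n → F) // IsNilpotent g} ≃
      {A : Matrix (Fin n) (Fin n) F // IsNilpotent A} := by
    refine Equiv.subtypeEquiv (LinearMap.toMatrixAlgEquiv' (R := F) (n := Fin n)).toEquiv
      (fun g => ⟨?_, ?_⟩)
    · rintro ⟨k, hk⟩
      exact ⟨k, by
        show (LinearMap.toMatrixAlgEquiv' g) ^ k = 0
        rw [← map_pow, hk, map_zero]⟩
    · rintro ⟨k, hk⟩
      refine ⟨k, (LinearMap.toMatrixAlgEquiv' (R := F) (n := Fin n)).injective ?_⟩
      rw [map_pow, map_zero]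
      exact hk
  rw [← Nat.card_congr e, card_nilpotent_end,
    show finrank F (Fin n → F) = n by simp [Module.finrank_fintype_fun_eq_card],
    nuaux_eq]

end Induction
section Assembly

/-- the equivalence between p-singular elements of GL and nilpotent matrices,
in positive dimension -/
noncomputable def unipEquiv (p : ℕ) [Fact p.Prime] (F : Type*) [Field F] [CharP F p]
    (n : Type*) [Fintype n] [DecidableEq n] [Nonempty n] :
    {g : GL n F // ∃ k : ℕ, orderOf g = p ^ k} ≃
      {A : Matrix n n F // IsNilpotent A} where
  toFun g := ⟨(g.1 : Matrix n n F) - 1, by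
    obtain ⟨k, hk⟩ := g.2
    refine ⟨p ^ k, ?_⟩
    rw [sub_pow_char_pow_of_commute p k (Commute.one_right _)]
    have h1 : g.1 ^ (p ^ k) = 1 := by rw [← hk]; exact pow_orderOf_eq_one g.1
    rw [one_pow, ← Units.val_pow_eq_pow_val, h1, Units.val_one, sub_self]⟩
  invFun A := ⟨(A.2.isUnit_add_one).unit, by
    obtain ⟨m, hm⟩ := A.2
    have hp : 1 < p := (Fact.out : p.Prime).one_lt
    have hord : (A.2.isUnit_add_one).unit ^ (p ^ m) = 1 := by
      apply Units.ext
      rw [Units.val_pow_eq_pow_val, IsUnit.unit_spec, Units.val_one]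
      have h2 : ((A.1 + 1) ^ (p ^ m) - 1 ^ (p ^ m) : Matrix n n F) = (A.1 + 1 - 1) ^ (p ^ m) :=
        (sub_pow_char_pow_of_commute p m (Commute.one_right _)).symm
      have h3 : ((A.1 + 1 - 1) ^ (p ^ m) : Matrix n n F) = 0 := by
        rw [add_sub_cancel_right]
        have : p ^ m = m + (p ^ m - m) := by
          have := (Nat.lt_pow_self (n := m) hp).le
          omega
        rw [this, pow_add, hm, zero_mul]
      rw [one_pow] at h2
      rw [h3] at h2
      exact sub_eq_zero.mp h2
    obtain ⟨k, _, hk⟩ := (Nat.dvd_prime_pow (Fact.out : p.Prime)).mp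
      (orderOf_dvd_of_pow_eq_one hord)
    exact ⟨k, hk⟩⟩
  left_inv g := by
    apply Subtype.ext
    apply Units.ext
    show _ = ((g.1 : Matrix n n F))
    rw [IsUnit.unit_spec, sub_add_cancel]
  right_inv A := by
    apply Subtype.ext
    show (((A.2.isUnit_add_one).unit : (Matrix n n F)ˣ) : Matrix n n F) - 1 = A.1
    rw [IsUnit.unit_spec, add_sub_cancel_right]

/-- **Steinberg's theorem for `GL(n, F_q)`.** If `q = p ^ e` is a power of the prime `p`
and `K = GL(n, F_q)`, then the number of `p`-singular elements of `K` equals `|K|_p ^ 2`,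
the square of the `p`-part of the order of `K`. -/
theorem steinberg_GL (p e n : ℕ) [Fact p.Prime] (he : 0 < e) :
    Nat.card {g : Matrix.GeneralLinearGroup (Fin n) (GaloisField p e) |
        ∃ k : ℕ, orderOf g = p ^ k} =
      (p ^ ((Nat.card (Matrix.GeneralLinearGroup (Fin n) (GaloisField p e))).factorization p)) ^ 2 := by
  set F := GaloisField p e with hFdef
  haveI : Fintype F := Fintype.ofFinite F
  have hp : p.Prime := Fact.out
  have hqcard : Fintype.card F = p ^ e := by
    rw [← Nat.card_eq_fintype_card, GaloisField.card p e he.ne']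
  have hq1 : 1 < Fintype.card F := Fintype.one_lt_card
  -- the order of GL
  have hGL : Nat.card (GL (Fin n) F) = ggaux (Fintype.card F) n := by
    rw [Matrix.card_GL_field, prod_card_GL_eq_ggaux hq1]
  -- the p-part
  have hfact : (Nat.card (GL (Fin n) F)).factorization p = e * EEaux n := by
    rw [hGL]
    show ((Fintype.card F) ^ (EEaux n) * PPaux (Fintype.card F) n).factorization p = _
    have hPP : ¬ p ∣ PPaux (Fintype.card F) n := by
      intro hdvd
      obtain ⟨i, -, hi⟩ := (hp.prime.dvd_finset_prod_iff _).mp hdvd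
      have h1 : p ∣ (Fintype.card F) ^ (i + 1) := by
        rw [hqcard, ← pow_mul]
        exact dvd_pow_self p (by positivity)
      have h2 : p ∣ 1 := by
        have h3 : (Fintype.card F) ^ (i + 1) - ((Fintype.card F) ^ (i + 1) - 1) = 1 := by
          have : 1 ≤ (Fintype.card F) ^ (i + 1) := Nat.one_le_pow _ _ (by omega)
          omega
        rw [← h3]
        exact Nat.dvd_sub h1 hi
      have := Nat.eq_one_of_dvd_one h2
      have := hp.one_lt
      omega
    rw [hqcard] at hPP
    have hppos : 0 < PPaux (p ^ e) n := by rw [← hqcard]; exact PPaux_pos hq1 n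
    rw [hqcard, ← pow_mul, Nat.factorization_mul (pow_ne_zero _ hp.pos.ne') hppos.ne',
      Finsupp.add_apply, hp.factorization_pow, Nat.factorization_eq_zero_of_not_dvd hPP]
    simp [mul_comm]
  rw [hfact]
  -- now split on n
  rcases n with _ | m
  · -- n = 0
    have h1 : Nat.card {g : GL (Fin 0) F | ∃ k : ℕ, orderOf g = p ^ k} = 1 := by
      rw [Nat.card_eq_one_iff_unique]
      constructor
      · infer_instance
      · exact ⟨⟨1, ⟨0, by simp⟩⟩⟩
    rw [h1]
    simp [EEaux]
  · -- n = m + 1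
    haveI : CharP F p := by infer_instance
    have h2 : Nat.card {g : GL (Fin (m + 1)) F | ∃ k : ℕ, orderOf g = p ^ k} =
        Nat.card {A : Matrix (Fin (m + 1)) (Fin (m + 1)) F // IsNilpotent A} :=
      Nat.card_congr (unipEquiv p F (Fin (m + 1)))
    rw [h2, card_nilpotent_matrix, hqcard, ← pow_mul, ← pow_mul]
    congr 1
    ring

end Assembly
end

section
/- Let G be a finite group with a normal p-subgroup N = O_p(G). Then the map H ↦ H/N is a bijection between the p-radical subgroups of G and the p-radical subgroups of G/O_p(G). -/
/-- `O_p(G)`: the largest normal `p`-subgroup of `G`, i.e. the join of all normal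
`p`-subgroups (wrapped in `normalCore`, which is the identity on normal subgroups,
to record normality). -/
def pCore (p : ℕ) (G : Type*) [Group G] : Subgroup G :=
  (sSup {N : Subgroup G | N.Normal ∧ IsPGroup p N}).normalCore

instance pCore_normal (p : ℕ) (G : Type*) [Group G] : (pCore p G).Normal :=
  Subgroup.normalCore_normal _

/-- A subgroup `H ≤ X` is `p`-radical if it is a `p`-subgroup and `H = O_p(N_X(H))`,
where `O_p(N_X(H))` is the join of all subgroups of `N_X(H)` that are `p`-groups and
normal in `N_X(H)`. -/
def IsRadicalPSubgroup (p : ℕ) {X : Type*} [Group X] (H : Subgroup X) : Prop :=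
  IsPGroup p H ∧
    H = sSup {N : Subgroup X | N ≤ Subgroup.normalizer (H : Set X) ∧ IsPGroup p N ∧
        ∀ g ∈ Subgroup.normalizer (H : Set X), ∀ x ∈ N, g * x * g⁻¹ ∈ N}

section Aux

variable {G : Type*} [Group G] {p : ℕ}

/-- The sSup of a set of normal subgroups is normal. -/
lemma aux_sSup_normal (S : Set (Subgroup G)) (hS : ∀ N ∈ S, N.Normal) :
    (sSup S).Normal := by
  constructor
  intro x hx g
  have key : sSup S ≤ Subgroup.comap (MulAut.conj g).toMonoidHom (sSup S) := by
    refine sSup_le fun N hN => ?_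
    intro n hn
    have : g * n * g⁻¹ ∈ N := (hS N hN).conj_mem n hn g
    exact Subgroup.mem_comap.mpr (le_sSup hN this)
  exact key hx

lemma pCore_eq (p : ℕ) (G : Type*) [Group G] :
    pCore p G = sSup {N : Subgroup G | N.Normal ∧ IsPGroup p N} := by
  have : (sSup {N : Subgroup G | N.Normal ∧ IsPGroup p N}).Normal :=
    aux_sSup_normal _ fun N hN => hN.1
  exact Subgroup.normalCore_eq_self _

lemma pCore_isPGroup [Finite G] (hp : p.Prime) : IsPGroup p (pCore p G) := by
  classical
  rw [pCore_eq]
  have : Finite (Subgroup G) := inferInstance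
  set S : Set (Subgroup G) := {N : Subgroup G | N.Normal ∧ IsPGroup p N} with hSdef
  have hfin : S.Finite := Set.toFinite S
  have key : ∀ s : Finset (Subgroup G), (∀ N ∈ s, N ∈ S) →
      (s.sup id).Normal ∧ IsPGroup p (s.sup id : Subgroup G) := by
    intro s
    induction s using Finset.induction_on with
    | empty =>
        intro _
        rw [Finset.sup_empty]
        exact ⟨inferInstance, IsPGroup.of_bot⟩
    | insert N s' hN ih =>
      intro hmem
      have h1 : N ∈ S := hmem N (Finset.mem_insert_self _ _)
      obtain ⟨hn1, hp1⟩ := h1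
      obtain ⟨hn2, hp2⟩ := ih fun M hM => hmem M (Finset.mem_insert_of_mem hM)
      rw [Finset.sup_insert]
      simp only [id_eq]
      haveI := hn1
      haveI := hn2
      exact ⟨Subgroup.sup_normal _ _, IsPGroup.to_sup_of_normal_right hp1 hp2⟩
  have := key hfin.toFinset (by simp)
  rw [Finset.sup_id_eq_sSup, hfin.coe_toFinset] at this
  exact this.2

lemma le_pCore {N : Subgroup G} (hN : N.Normal) (h : IsPGroup p N) : N ≤ pCore p G := by
  rw [pCore_eq]; exact le_sSup ⟨hN, h⟩

/-- p-group extension: comap of a p-group along a hom with p-group kernel. -/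
lemma isPGroup_comap {Q : Type*} [Group Q] (f : G →* Q) (K : Subgroup Q)
    (hker : IsPGroup p f.ker) (hK : IsPGroup p K) : IsPGroup p (K.comap f) := by
  intro ⟨g, hg⟩
  obtain ⟨k, hk⟩ := hK ⟨f g, hg⟩
  have hk' : (f g) ^ p ^ k = 1 := by
    have := congrArg (Subtype.val) hk
    simpa using this
  have hmem : g ^ p ^ k ∈ f.ker := by
    rw [MonoidHom.mem_ker, map_pow, hk']
  obtain ⟨m, hm⟩ := hker ⟨g ^ p ^ k, hmem⟩
  have hm' : (g ^ p ^ k) ^ p ^ m = 1 := by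
    have := congrArg (Subtype.val) hm
    simpa using this
  refine ⟨k + m, ?_⟩
  ext
  simp only [SubmonoidClass.coe_pow, OneMemClass.coe_one]
  rw [pow_add, pow_mul, hm']

/-- For a surjective `f` with kernel contained in `H`, comap of the normalizer of the
image is the normalizer. -/
lemma comap_normalizer_map {Q : Type*} [Group Q] (f : G →* Q) (hf : Function.Surjective f)
    (H : Subgroup G) (hker : f.ker ≤ H) :
    (Subgroup.normalizer ((H.map f : Subgroup Q) : Set Q)).comap f = Subgroup.normalizer (H : Set G) := by
  have hcm : (H.map f).comap f = H := Subgroup.comap_map_eq_self hker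
  ext x
  simp only [Subgroup.mem_comap, Subgroup.mem_normalizer_iff]
  constructor
  · intro h a
    have := h (f a)
    constructor
    · intro ha
      have h1 : f a ∈ H.map f := Subgroup.mem_map_of_mem f ha
      have h2 : f x * f a * (f x)⁻¹ ∈ H.map f := (this).mp h1
      have : f (x * a * x⁻¹) ∈ H.map f := by simpa using h2
      have := (Subgroup.mem_comap.mpr this)
      rwa [hcm] at this
    · intro ha
      have h1 : f (x * a * x⁻¹) ∈ H.map f := Subgroup.mem_map_of_mem f ha
      have h2 : f x * f a * (f x)⁻¹ ∈ H.map f := by simpa using h1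
      have h3 : f a ∈ H.map f := (this).mpr h2
      have := (Subgroup.mem_comap.mpr h3)
      rwa [hcm] at this
  · intro h b
    obtain ⟨a, rfl⟩ := hf b
    constructor
    · intro ha
      have h1 : a ∈ H := by rw [← hcm]; exact Subgroup.mem_comap.mpr ha
      have h2 : x * a * x⁻¹ ∈ H := (h a).mp h1
      have : f (x * a * x⁻¹) ∈ H.map f := Subgroup.mem_map_of_mem f h2
      simpa using this
    · intro ha
      have h1 : f (x * a * x⁻¹) ∈ H.map f := by simpa using ha
      have h2 : x * a * x⁻¹ ∈ H := by
        rw [← hcm]; exact Subgroup.mem_comap.mpr h1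
      have h3 : a ∈ H := (h a).mpr h2
      exact Subgroup.mem_map_of_mem f h3

lemma map_normalizer_eq {Q : Type*} [Group Q] (f : G →* Q) (hf : Function.Surjective f)
    (H : Subgroup G) (hker : f.ker ≤ H) :
    (Subgroup.normalizer (H : Set G)).map f = Subgroup.normalizer ((H.map f : Subgroup Q) : Set Q) := by
  conv_lhs => rw [← comap_normalizer_map f hf H hker]
  exact Subgroup.map_comap_eq_self_of_surjective hf _

/-- The defining set of the radical condition. -/
def radSet (p : ℕ) {X : Type*} [Group X] (H : Subgroup X) : Set (Subgroup X) :=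
  {N : Subgroup X | N ≤ Subgroup.normalizer (H : Set X) ∧ IsPGroup p N ∧
      ∀ g ∈ Subgroup.normalizer (H : Set X), ∀ x ∈ N, g * x * g⁻¹ ∈ N}

lemma map_sSup_radSet {Q : Type*} [Group Q] (f : G →* Q) (hf : Function.Surjective f)
    (hkerP : IsPGroup p f.ker) (H : Subgroup G) (hker : f.ker ≤ H) :
    (sSup (radSet p H)).map f = sSup (radSet p (H.map f)) := by
  apply le_antisymm
  · rw [(Subgroup.gc_map_comap f).l_sSup]
    refine iSup₂_le fun N' hN' => ?_
    obtain ⟨hle, hpg, hconj⟩ := hN'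
    refine le_sSup ⟨?_, hpg.map f, ?_⟩
    · rw [← map_normalizer_eq f hf H hker]
      exact Subgroup.map_mono hle
    · intro g hg x hx
      rw [← map_normalizer_eq f hf H hker] at hg
      obtain ⟨g₀, hg₀, rfl⟩ := hg
      obtain ⟨x₀, hx₀, rfl⟩ := hx
      have : g₀ * x₀ * g₀⁻¹ ∈ N' := hconj g₀ hg₀ x₀ hx₀
      have := Subgroup.mem_map_of_mem f this
      simpa using this
  · refine sSup_le fun K' hK' => ?_
    obtain ⟨hle, hpg, hconj⟩ := hK'
    have hmem : K'.comap f ∈ radSet p H := by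
      refine ⟨?_, isPGroup_comap f K' hkerP hpg, ?_⟩
      · calc K'.comap f ≤ (Subgroup.normalizer ((H.map f : Subgroup Q) : Set Q)).comap f := Subgroup.comap_mono hle
          _ = Subgroup.normalizer (H : Set G) := comap_normalizer_map f hf H hker
      · intro g hg x hx
        simp only [Subgroup.mem_comap] at hx ⊢
        have hfg : f g ∈ Subgroup.normalizer ((H.map f : Subgroup Q) : Set Q) := by
          rw [← map_normalizer_eq f hf H hker]
          exact Subgroup.mem_map_of_mem f hg
        have := hconj (f g) hfg (f x) hx
        simpa using this
    calc K' = (K'.comap f).map f := (Subgroup.map_comap_eq_self_of_surjective hf _).symm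
      _ ≤ (sSup (radSet p H)).map f := Subgroup.map_mono (le_sSup hmem)

/-- Every radical `p`-subgroup contains the `p`-core. -/
lemma pCore_le_of_radical [Finite G] (hp : p.Prime) {H : Subgroup G}
    (hH : IsRadicalPSubgroup p H) : pCore p G ≤ H := by
  haveI : Fact p.Prime := ⟨hp⟩
  obtain ⟨hHp, hHeq⟩ := hH
  have hHeq : H = sSup (radSet p H) := hHeq
  set N := pCore p G with hNdef
  by_contra hn
  -- P = H ⊔ N is a p-group
  have hNp : IsPGroup p N := pCore_isPGroup hp
  have hP : IsPGroup p (H ⊔ N : Subgroup G) := IsPGroup.to_sup_of_normal_right hHp hNp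
  set P : Subgroup G := H ⊔ N with hPdef
  have hHltP : H < P := by
    rcases lt_or_eq_of_le (le_sup_left : H ≤ P) with h | h
    · exact h
    · exfalso; exact hn (h ▸ le_sup_right)
  -- normalizer condition in the p-group P
  have hPgrp : IsPGroup p P := hP
  haveI : Finite P := inferInstance
  have hnilp : Group.IsNilpotent P := hPgrp.isNilpotent
  have hNC : NormalizerCondition P := normalizerCondition_of_isNilpotent
  have hHP : H.subgroupOf P < ⊤ := by
    rw [lt_top_iff_ne_top]
    intro hcontr
    rw [Subgroup.subgroupOf_eq_top] at hcontr
    exact (lt_irrefl H) (lt_of_lt_of_le hHltP hcontr)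
  have hlt := hNC (H.subgroupOf P) hHP
  obtain ⟨g, hg_norm, hg_not⟩ := SetLike.exists_of_lt hlt
  -- (g : G) normalizes H
  have hgG : (g : G) ∈ Subgroup.normalizer (H : Set G) := by
    rw [Subgroup.mem_normalizer_iff]
    intro h
    constructor
    · intro hh
      have hhP : h ∈ P := (le_sup_left : H ≤ P) hh
      have : (⟨h, hhP⟩ : P) ∈ H.subgroupOf P := Subgroup.mem_subgroupOf.mpr hh
      have := (Subgroup.mem_normalizer_iff.mp hg_norm ⟨h, hhP⟩).mp this
      have := Subgroup.mem_subgroupOf.mp this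
      simpa using this
    · intro hh
      have hginv : g⁻¹ ∈ Subgroup.normalizer ((H.subgroupOf P : Subgroup P) : Set P) := inv_mem hg_norm
      have hhP : (g : G) * h * (g : G)⁻¹ ∈ P := (le_sup_left : H ≤ P) hh
      have : (⟨(g : G) * h * (g : G)⁻¹, hhP⟩ : P) ∈ H.subgroupOf P :=
        Subgroup.mem_subgroupOf.mpr hh
      have h2 := (Subgroup.mem_normalizer_iff.mp hginv
        ⟨(g : G) * h * (g : G)⁻¹, hhP⟩).mp this
      have h3 := Subgroup.mem_subgroupOf.mp h2
      have : (g : G)⁻¹ * ((g : G) * h * (g : G)⁻¹) * ((g : G)⁻¹)⁻¹ ∈ H := by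
        simpa using h3
      have heq : (g : G)⁻¹ * ((g : G) * h * (g : G)⁻¹) * ((g : G)⁻¹)⁻¹ = h := by
        group
      rwa [heq] at this
  -- N ⊓ Subgroup.normalizer (H : Set G) is in the radical set, hence ≤ H
  have hmem : N ⊓ Subgroup.normalizer (H : Set G) ∈ radSet p H := by
    refine ⟨inf_le_right, hNp.to_le inf_le_left, ?_⟩
    intro g' hg' x hx
    obtain ⟨hx1, hx2⟩ := Subgroup.mem_inf.mp hx
    refine Subgroup.mem_inf.mpr ⟨(pCore_normal p G).conj_mem x hx1 g', ?_⟩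
    exact mul_mem (mul_mem hg' hx2) (inv_mem hg')
  have hinf_le : N ⊓ Subgroup.normalizer (H : Set G) ≤ H := by
    conv_rhs => rw [hHeq]
    exact le_sSup hmem
  -- write g = h * n
  have hgP : (g : G) ∈ P := g.2
  have : (g : G) ∈ (↑(H ⊔ N) : Set G) := hgP
  rw [Subgroup.mul_normal H N] at this
  obtain ⟨h, hh, n, hn', hmul0⟩ := this
  have hmul : h * n = (g : G) := hmul0
  have hgH : h * n ∈ Subgroup.normalizer (H : Set G) := by rw [hmul]; exact hgG
  have hnnorm : n ∈ Subgroup.normalizer (H : Set G) := by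
    have h1 : h⁻¹ * (h * n) ∈ Subgroup.normalizer (H : Set G) :=
      mul_mem (inv_mem (Subgroup.le_normalizer hh)) hgH
    simpa using h1
  have hnH : n ∈ H := hinf_le (Subgroup.mem_inf.mpr ⟨hn', hnnorm⟩)
  have : (g : G) ∈ H := by rw [← hmul]; exact mul_mem hh hnH
  exact hg_not (Subgroup.mem_subgroupOf.mpr this)

end Aux

/-- The map `H ↦ H / O_p(G)` is a bijection between the `p`-radical subgroups of `G`
and the `p`-radical subgroups of `G / O_p(G)`. -/
theorem pRadical_quotient_bijection (G : Type*) [Group G] [Finite G] (p : ℕ)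
    (hp : p.Prime) :
    Set.BijOn (Subgroup.map (QuotientGroup.mk' (pCore p G)))
      {H : Subgroup G | IsRadicalPSubgroup p H}
      {K : Subgroup (G ⧸ pCore p G) | IsRadicalPSubgroup p K} := by
  set N := pCore p G with hN
  set f := QuotientGroup.mk' N with hf
  have hfs : Function.Surjective f := QuotientGroup.mk'_surjective N
  have hker : f.ker = N := QuotientGroup.ker_mk' N
  have hkerP : IsPGroup p f.ker := by rw [hker]; exact pCore_isPGroup hp
  refine ⟨?_, ?_, ?_⟩
  · -- MapsTo
    intro H hH
    have hkerle : f.ker ≤ H := hker.le.trans (pCore_le_of_radical hp hH)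
    refine ⟨hH.1.map f, ?_⟩
    show Subgroup.map f H = sSup (radSet p (H.map f))
    conv_lhs => rw [show H = sSup (radSet p H) from hH.2]
    exact map_sSup_radSet f hfs hkerP H hkerle
  · -- InjOn
    intro H1 h1 H2 h2 heq
    have k1 : f.ker ≤ H1 := hker.le.trans (pCore_le_of_radical hp h1)
    have k2 : f.ker ≤ H2 := hker.le.trans (pCore_le_of_radical hp h2)
    calc H1 = (H1.map f).comap f := (Subgroup.comap_map_eq_self k1).symm
      _ = (H2.map f).comap f := by rw [heq]
      _ = H2 := Subgroup.comap_map_eq_self k2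
  · -- SurjOn
    intro K hK
    obtain ⟨hKp, hKeq⟩ := hK
    set H := K.comap f with hH
    have hkerle : f.ker ≤ H := by
      rw [hH]
      intro x hx
      simp only [Subgroup.mem_comap]
      rw [MonoidHom.mem_ker] at hx
      rw [hx]; exact one_mem K
    have hmapH : H.map f = K := Subgroup.map_comap_eq_self_of_surjective hfs K
    have hHp : IsPGroup p H := isPGroup_comap f K hkerP hKp
    have hKeq' : K = sSup (radSet p K) := hKeq
    have hkey : (sSup (radSet p H)).map f = H.map f := by
      rw [map_sSup_radSet f hfs hkerP H hkerle, hmapH]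
      exact hKeq'.symm
    have hsup_ker : f.ker ≤ sSup (radSet p H) := by
      refine le_trans ?_ (le_sSup (s := radSet p H) (a := N) ?_)
      · rw [hker]
      · refine ⟨le_trans (hker.ge.trans hkerle) Subgroup.le_normalizer, pCore_isPGroup hp, ?_⟩
        intro g _ x hx
        exact (pCore_normal p G).conj_mem x hx g
    have hHeq : H = sSup (radSet p H) := by
      calc H = (H.map f).comap f := (Subgroup.comap_map_eq_self hkerle).symm
        _ = ((sSup (radSet p H)).map f).comap f := by rw [hkey]
        _ = sSup (radSet p H) := Subgroup.comap_map_eq_self hsup_ker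
    exact ⟨H, ⟨hHp, hHeq⟩, hmapH⟩
end

section
/- In K = GL(n, F_q) with q a power of p, if U_I and U_J are the unipotent radicals of the standard parabolic subgroups P_I and P_J (for subsets I, J of the set of fundamental roots), then the transporter set N_K(U_I, U_J) = {g : g⁻¹U_Ig ⊆ U_J} equals N_K(U_I) = P_I when I ⊇ J, and is empty otherwise. -/
namespace ParabolicGL

variable (n : ℕ) {F : Type*} [Field F]

/-- Indices `i j` of `Fin n` are separated by a wall of the subset `I` of the `n - 1`
fundamental roots: some `k ∉ I` lies between them.  The blocks of the standard
parabolic `P_I` are the maximal wall-free intervals. -/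
def Separated (I : Finset (Fin (n - 1))) (i j : Fin n) : Prop :=
  ∃ k : Fin (n - 1), k ∉ I ∧ min i.val j.val ≤ k.val ∧ k.val < max i.val j.val

/-- The standard parabolic subgroup `P_I` of `GL(n, F)`: block upper triangular
matrices for the block decomposition determined by `I`. -/
def P (I : Finset (Fin (n - 1))) : Set (Matrix.GeneralLinearGroup (Fin n) F) :=
  {A | ∀ i j : Fin n, j < i → Separated n I i j →
    (A : Matrix (Fin n) (Fin n) F) i j = 0}

/-- The unipotent radical `U_I = O_p(P_I)` of the standard parabolic `P_I`: block upper
triangular matrices whose diagonal blocks are identity blocks. -/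
def U (I : Finset (Fin (n - 1))) : Set (Matrix.GeneralLinearGroup (Fin n) F) :=
  {A | A ∈ P n I ∧ ∀ i j : Fin n, ¬ Separated n I i j →
    (A : Matrix (Fin n) (Fin n) F) i j = if i = j then 1 else 0}

end ParabolicGL

open ParabolicGL

namespace ParabolicGLProof

open Finset Matrix

variable {n : ℕ} {F : Type*} [Field F]

/-- The block index function: `ff I i` counts the walls (elements of the complement of `I`)
lying strictly below `i`. -/
def ff (I : Finset (Fin (n - 1))) (i : Fin n) : ℕ :=
  ((Finset.univ : Finset (Fin (n - 1))).filter (fun k => k ∉ I ∧ k.val < i.val)).card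

lemma ff_mono {I : Finset (Fin (n - 1))} {i j : Fin n} (h : i.val ≤ j.val) :
    ff I i ≤ ff I j := by
  apply Finset.card_le_card
  intro k hk
  simp only [Finset.mem_filter] at *
  exact ⟨hk.1, hk.2.1, lt_of_lt_of_le hk.2.2 h⟩

lemma ff_lt_of_wall {I : Finset (Fin (n - 1))} {i j : Fin n} (k : Fin (n - 1))
    (hk : k ∉ I) (h1 : i.val ≤ k.val) (h2 : k.val < j.val) : ff I i < ff I j := by
  apply Finset.card_lt_card
  constructor
  · intro k' hk'
    simp only [Finset.mem_filter] at *
    exact ⟨hk'.1, hk'.2.1, lt_of_lt_of_le hk'.2.2 (le_of_lt (lt_of_le_of_lt h1 h2))⟩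
  · intro hsub
    have := hsub (by simp [hk, h2] : k ∈ _)
    simp only [Finset.mem_filter] at this
    omega

lemma exists_wall_of_ff_lt {I : Finset (Fin (n - 1))} {i j : Fin n} (h : ff I i < ff I j) :
    ∃ k : Fin (n - 1), k ∉ I ∧ i.val ≤ k.val ∧ k.val < j.val := by
  have hns : ¬ ((Finset.univ : Finset (Fin (n - 1))).filter (fun k => k ∉ I ∧ k.val < j.val) ⊆
      (Finset.univ : Finset (Fin (n - 1))).filter (fun k => k ∉ I ∧ k.val < i.val)) := by
    intro hsub
    exact absurd (Finset.card_le_card hsub) (not_le.mpr h)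
  obtain ⟨k, hk1, hk2⟩ := Finset.not_subset.mp hns
  simp only [Finset.mem_filter, Finset.mem_univ, true_and, not_and, not_lt] at hk1 hk2
  exact ⟨k, hk1.1, hk2 hk1.1, hk1.2⟩

lemma val_lt_of_ff_lt {I : Finset (Fin (n - 1))} {i j : Fin n} (h : ff I i < ff I j) :
    i.val < j.val := by
  obtain ⟨k, _, h1, h2⟩ := exists_wall_of_ff_lt h
  omega

lemma sep_iff {I : Finset (Fin (n - 1))} {i j : Fin n} :
    Separated n I i j ↔ ff I i ≠ ff I j := by
  constructor
  · rintro ⟨k, hk, h1, h2⟩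
    rcases lt_trichotomy i.val j.val with hij | hij | hij
    · have : ff I i < ff I j := ff_lt_of_wall k hk (by omega) (by omega)
      omega
    · omega
    · have : ff I j < ff I i := ff_lt_of_wall k hk (by omega) (by omega)
      omega
  · intro h
    rcases Nat.lt_or_ge (ff I i) (ff I j) with hlt | hge
    · obtain ⟨k, hk, h1, h2⟩ := exists_wall_of_ff_lt hlt
      exact ⟨k, hk, by omega, by omega⟩
    · have hlt : ff I j < ff I i := by omega
      obtain ⟨k, hk, h1, h2⟩ := exists_wall_of_ff_lt hlt
      exact ⟨k, hk, by omega, by omega⟩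

lemma mem_P_iff {I : Finset (Fin (n - 1))} {A : Matrix.GeneralLinearGroup (Fin n) F} :
    A ∈ P n I ↔ BlockTriangular (A : Matrix (Fin n) (Fin n) F) (ff I) := by
  constructor
  · intro hA i j hij
    have hval : j.val < i.val := val_lt_of_ff_lt hij
    exact hA i j (by exact hval) (sep_iff.mpr (by omega))
  · intro hA i j hij hsep
    apply hA
    have hne := sep_iff.mp hsep
    have hle : ff I j ≤ ff I i := ff_mono (le_of_lt hij)
    omega

lemma mem_U_iff {I : Finset (Fin (n - 1))} {A : Matrix.GeneralLinearGroup (Fin n) F} :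
    A ∈ U n I ↔ ∀ i j : Fin n, ¬ ff I i < ff I j →
      (A : Matrix (Fin n) (Fin n) F) i j = (1 : Matrix (Fin n) (Fin n) F) i j := by
  constructor
  · rintro ⟨hP, hD⟩ i j hij
    rcases Nat.lt_or_ge (ff I j) (ff I i) with hlt | hge
    · have hval : j.val < i.val := val_lt_of_ff_lt hlt
      have h0 : (A : Matrix (Fin n) (Fin n) F) i j = 0 :=
        hP i j hval (sep_iff.mpr (by omega))
      rw [h0, Matrix.one_apply_ne]
      intro he; rw [he] at hval; omega
    · have heq : ff I i = ff I j := by omega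
      rw [hD i j (by rw [sep_iff]; omega), Matrix.one_apply]
  · intro h
    constructor
    · intro i j hij hsep
      have hne := sep_iff.mp hsep
      have hle : ff I j ≤ ff I i := ff_mono (le_of_lt hij)
      have := h i j (by omega)
      rw [this, Matrix.one_apply_ne]
      intro he; rw [he] at hij; exact absurd rfl (ne_of_lt hij)
    · intro i j hsep
      have hne := sep_iff.not_left.mp hsep
      have := h i j (by omega)
      rw [this, Matrix.one_apply]

lemma ff_lt_mono_of_subset {I J : Finset (Fin (n - 1))} (hJI : J ⊆ I) {i j : Fin n}
    (h : ff I i < ff I j) : ff J i < ff J j := by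
  obtain ⟨k, hk, h1, h2⟩ := exists_wall_of_ff_lt h
  exact ff_lt_of_wall k (fun hkJ => hk (hJI hkJ)) h1 h2

lemma triple_entry (B A : Matrix (Fin n) (Fin n) F) (a b i j : Fin n) :
    (B * single a b (1 : F) * A) i j = B i a * A b j := by
  rw [Matrix.mul_assoc, Matrix.mul_apply]
  rw [Finset.sum_eq_single a]
  · rw [Matrix.single_mul_apply_same]
    ring
  · intro k _ hk
    rw [Matrix.single_mul_apply_of_ne (c := 1) a b k j hk A, mul_zero]
  · simp

lemma decomp (B A M : Matrix (Fin n) (Fin n) F) (hBA : B * A = 1) :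
    B * M * A = 1 + B * (M - 1) * A := by
  rw [Matrix.mul_sub, Matrix.mul_one, Matrix.sub_mul, hBA]
  abel

lemma exists_perm {M : Matrix (Fin n) (Fin n) F} (h : M.det ≠ 0) :
    ∃ σ : Equiv.Perm (Fin n), ∀ a, M (σ a) a ≠ 0 := by
  by_contra hc
  push_neg at hc
  apply h
  rw [Matrix.det_apply]
  apply Finset.sum_eq_zero
  intro σ _
  obtain ⟨a, ha⟩ := hc σ
  have hz : (∏ i, M (σ i) i) = 0 := Finset.prod_eq_zero (Finset.mem_univ a) ha
  rw [hz, smul_zero]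

lemma lowerset_mem_iff {s : Finset (Fin n)} (hs : ∀ x y : Fin n, x ≤ y → y ∈ s → x ∈ s)
    (x : Fin n) : x ∈ s ↔ x.val < s.card := by
  constructor
  · intro hx
    have hsub : Finset.Iic x ⊆ s := fun y hy => hs y x (Finset.mem_Iic.mp hy) hx
    have := Finset.card_le_card hsub
    rw [Fin.card_Iic] at this
    omega
  · intro hx
    by_contra hxs
    have hsub : s ⊆ Finset.Iio x := by
      intro y hy
      rw [Finset.mem_Iio]
      by_contra hyx
      exact hxs (hs x y (not_lt.mp hyx) hy)
    have := Finset.card_le_card hsub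
    rw [Fin.card_Iio] at this
    omega

lemma inv_blockTriangular {I : Finset (Fin (n - 1))} {g : Matrix.GeneralLinearGroup (Fin n) F}
    (hg : BlockTriangular (g : Matrix (Fin n) (Fin n) F) (ff I)) :
    BlockTriangular ((g⁻¹ : Matrix.GeneralLinearGroup (Fin n) F) : Matrix (Fin n) (Fin n) F)
      (ff I) := by
  have h : ((g⁻¹ : Matrix.GeneralLinearGroup (Fin n) F) : Matrix (Fin n) (Fin n) F)
      = ((g : Matrix (Fin n) (Fin n) F))⁻¹ := Matrix.coe_units_inv g
  rw [h]
  letI : Invertible (g : Matrix (Fin n) (Fin n) F) := g.invertible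
  exact Matrix.blockTriangular_inv_of_blockTriangular hg

/-- The easy inclusion: a block upper triangular `g` conjugates `U_I` into `U_J` for `J ⊆ I`. -/
lemma easy {I J : Finset (Fin (n - 1))} (hJI : J ⊆ I)
    {g u : Matrix.GeneralLinearGroup (Fin n) F}
    (hg : BlockTriangular (g : Matrix (Fin n) (Fin n) F) (ff I))
    (hu : u ∈ U n I) : g⁻¹ * u * g ∈ U n J := by
  have hginv := inv_blockTriangular hg
  rw [mem_U_iff] at hu ⊢
  intro i j hij
  set B := ((g⁻¹ : Matrix.GeneralLinearGroup (Fin n) F) : Matrix (Fin n) (Fin n) F) with hB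
  set A := ((g : Matrix.GeneralLinearGroup (Fin n) F) : Matrix (Fin n) (Fin n) F) with hA
  have hcoe : ((g⁻¹ * u * g : Matrix.GeneralLinearGroup (Fin n) F) :
      Matrix (Fin n) (Fin n) F) = B * (u : Matrix (Fin n) (Fin n) F) * A := by
    rw [Units.val_mul, Units.val_mul]
  have hBA : B * A = 1 := Units.inv_mul g
  rw [hcoe, decomp B A _ hBA, Matrix.add_apply]
  have hz : (B * ((u : Matrix (Fin n) (Fin n) F) - 1) * A) i j = 0 := by
    rw [Matrix.mul_assoc, Matrix.mul_apply]
    apply Finset.sum_eq_zero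
    intro k _
    by_cases hBk : B i k = 0
    · rw [hBk, zero_mul]
    rw [Matrix.mul_apply, Finset.mul_sum]
    apply Finset.sum_eq_zero
    intro l _
    by_cases hul : ((u : Matrix (Fin n) (Fin n) F) - 1) k l = 0
    · rw [hul, zero_mul, mul_zero]
    by_cases hAl : A l j = 0
    · rw [hAl, mul_zero, mul_zero]
    exfalso
    have h1 : ff I i ≤ ff I k := not_lt.mp (fun hlt => hBk (hginv hlt))
    have h3 : ff I l ≤ ff I j := not_lt.mp (fun hlt => hAl (hg hlt))
    have h2 : ff I k < ff I l := by
      by_contra hkl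
      exact hul (by rw [Matrix.sub_apply, hu k l hkl, sub_self])
    exact hij (ff_lt_mono_of_subset hJI (by omega))
  rw [hz, add_zero]

/-- The hard direction: if `g` conjugates all of `U_I` into `U_J`, then `g` is block upper
triangular for `I` and moreover `J ⊆ I`. -/
lemma hard {I J : Finset (Fin (n - 1))} {g : Matrix.GeneralLinearGroup (Fin n) F}
    (H : ∀ u ∈ U n I, g⁻¹ * u * g ∈ U n J) :
    BlockTriangular (g : Matrix (Fin n) (Fin n) F) (ff I) ∧ J ⊆ I := by
  classical
  set A := ((g : Matrix.GeneralLinearGroup (Fin n) F) : Matrix (Fin n) (Fin n) F) with hA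
  set B := ((g⁻¹ : Matrix.GeneralLinearGroup (Fin n) F) : Matrix (Fin n) (Fin n) F) with hB
  have hBA : B * A = 1 := Units.inv_mul g
  have hdetA : A.det ≠ 0 := ((Matrix.isUnit_iff_isUnit_det A).mp g.isUnit).ne_zero
  have hdetB : B.det ≠ 0 := ((Matrix.isUnit_iff_isUnit_det B).mp (g⁻¹).isUnit).ne_zero
  obtain ⟨σ, hσ⟩ := exists_perm hdetB
  obtain ⟨τ0, hτ0⟩ := exists_perm hdetA
  have hτ : ∀ b : Fin n, A b (τ0.symm b) ≠ 0 := fun b => by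
    have := hτ0 (τ0.symm b); rwa [Equiv.apply_symm_apply] at this
  have star : ∀ a b i j : Fin n, ff I a < ff I b → ¬ ff J i < ff J j → B i a * A b j = 0 := by
    intro a b i j hab hij
    have hne : b ≠ a := by
      have := val_lt_of_ff_lt hab
      intro h; rw [h] at this; omega
    set E := single a b (1 : F) with hE
    have hEE : E * E = 0 := Matrix.single_mul_single_of_ne (c := 1) a b a hne 1
    have h1 : ((1 : Matrix (Fin n) (Fin n) F) + E) * (1 - E) = 1 := by
      rw [mul_sub, add_mul, add_mul, one_mul, one_mul, mul_one, hEE]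
      abel
    have h2 : ((1 : Matrix (Fin n) (Fin n) F) - E) * (1 + E) = 1 := by
      rw [mul_add, sub_mul, sub_mul, one_mul, one_mul, mul_one, hEE]
      abel
    set t : Matrix.GeneralLinearGroup (Fin n) F := ⟨1 + E, 1 - E, h1, h2⟩ with ht
    have htU : t ∈ U n I := by
      rw [mem_U_iff]
      intro i' j' hij'
      show ((1 : Matrix (Fin n) (Fin n) F) + E) i' j' = _
      have hEz : E i' j' = 0 := by
        apply Matrix.single_apply_of_ne
        rintro ⟨rfl, rfl⟩
        exact hij' hab
      rw [Matrix.add_apply, hEz, add_zero]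
    have hmem := H t htU
    rw [mem_U_iff] at hmem
    have hentry := hmem i j hij
    have hcoe : ((g⁻¹ * t * g : Matrix.GeneralLinearGroup (Fin n) F) :
        Matrix (Fin n) (Fin n) F) = B * (1 + E) * A := by
      rw [Units.val_mul, Units.val_mul]
    have hexp : B * ((1 : Matrix (Fin n) (Fin n) F) + E) * A = 1 + B * E * A := by
      rw [Matrix.mul_add, Matrix.mul_one, Matrix.add_mul, hBA]
    rw [hcoe, hexp, Matrix.add_apply, triple_entry] at hentry
    exact add_left_cancel (hentry.trans (add_zero _).symm)
  have star' : ∀ a b i j : Fin n, ff I a < ff I b → B i a ≠ 0 → A b j ≠ 0 →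
      ff J i < ff J j := by
    intro a b i j hab hBi hAb
    by_contra hc
    rcases mul_eq_zero.mp (star a b i j hab hc) with h | h
    exacts [hBi h, hAb h]
  have key : ∀ t : ℕ, (∃ a : Fin n, ff I a ≤ t) →
      ∃ m : ℕ, (∀ x : Fin n, ff I x ≤ t ↔ ff J x ≤ m) ∧
        (∀ b j : Fin n, t < ff I b → A b j ≠ 0 → m < ff J j) := by
    rintro t ⟨a0, ha0⟩
    set Xset := Finset.univ.filter (fun i : Fin n => ∃ a, ff I a ≤ t ∧ B i a ≠ 0) with hX
    have hXne : (Xset.image (ff J)).Nonempty := by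
      refine ⟨ff J (σ a0), Finset.mem_image_of_mem _ ?_⟩
      simp only [hX, Finset.mem_filter, Finset.mem_univ, true_and]
      exact ⟨a0, ha0, hσ a0⟩
    set m := (Xset.image (ff J)).max' hXne with hm
    have hmem_le : ∀ i ∈ Xset, ff J i ≤ m := fun i hi =>
      Finset.le_max' _ _ (Finset.mem_image_of_mem _ hi)
    have hclaim2 : ∀ b j : Fin n, t < ff I b → A b j ≠ 0 → m < ff J j := by
      intro b j htb hAbj
      obtain ⟨i0, hi0X, hi0⟩ := Finset.mem_image.mp ((Xset.image (ff J)).max'_mem hXne)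
      simp only [hX, Finset.mem_filter, Finset.mem_univ, true_and] at hi0X
      obtain ⟨a1, ha1, hB1⟩ := hi0X
      have := star' a1 b i0 j (lt_of_le_of_lt ha1 htb) hB1 hAbj
      omega
    set sI := Finset.univ.filter (fun x : Fin n => ff I x ≤ t) with hsI
    set sJ := Finset.univ.filter (fun x : Fin n => ff J x ≤ m) with hsJ
    have hc1 : sI.card ≤ sJ.card := by
      apply Finset.card_le_card_of_injOn σ
      · intro a ha
        simp only [hsI, Finset.coe_filter, Set.mem_setOf_eq, Finset.mem_filter, Finset.mem_univ, true_and] at ha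
        simp only [hsJ, Finset.coe_filter, Set.mem_setOf_eq, Finset.mem_filter, Finset.mem_univ, true_and]
        apply hmem_le
        simp only [hX, Finset.mem_filter, Finset.mem_univ, true_and]
        exact ⟨a, ha, hσ a⟩
      · exact fun x _ y _ h => σ.injective h
    have hc2 : (Finset.univ.filter (fun x : Fin n => ¬ ff I x ≤ t)).card ≤
        (Finset.univ.filter (fun x : Fin n => ¬ ff J x ≤ m)).card := by
      apply Finset.card_le_card_of_injOn τ0.symm
      · intro b hb
        simp only [Finset.coe_filter, Set.mem_setOf_eq, Finset.mem_filter, Finset.mem_univ, true_and, not_le] at hb ⊢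
        exact hclaim2 b (τ0.symm b) hb (hτ b)
      · exact fun x _ y _ h => τ0.symm.injective h
    have hsum1 : sI.card + (Finset.univ.filter (fun x : Fin n => ¬ ff I x ≤ t)).card = n := by
      have := Finset.card_filter_add_card_filter_not
        (s := (Finset.univ : Finset (Fin n))) (p := fun x => ff I x ≤ t)
      simpa using this
    have hsum2 : sJ.card + (Finset.univ.filter (fun x : Fin n => ¬ ff J x ≤ m)).card = n := by
      have := Finset.card_filter_add_card_filter_not
        (s := (Finset.univ : Finset (Fin n))) (p := fun x => ff J x ≤ m)
      simpa using this
    have hcards : sI.card = sJ.card := by omega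
    refine ⟨m, ?_, hclaim2⟩
    intro x
    have hIiff := lowerset_mem_iff (s := sI) (fun x y hxy hy => by
      simp only [hsI, Finset.mem_filter, Finset.mem_univ, true_and] at hy ⊢
      exact le_trans (ff_mono hxy) hy) x
    have hJiff := lowerset_mem_iff (s := sJ) (fun x y hxy hy => by
      simp only [hsJ, Finset.mem_filter, Finset.mem_univ, true_and] at hy ⊢
      exact le_trans (ff_mono hxy) hy) x
    simp only [hsI, Finset.mem_filter, Finset.mem_univ, true_and] at hIiff
    simp only [hsJ, Finset.mem_filter, Finset.mem_univ, true_and] at hJiff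
    rw [hIiff, hJiff, hcards]
  constructor
  · intro i j hij
    by_contra hAij
    obtain ⟨m, hiff, h2⟩ := key (ff I j) ⟨j, le_refl _⟩
    have hm1 := h2 i j hij hAij
    have hm2 := (hiff j).mp (le_refl _)
    omega
  · intro k hkJ
    by_contra hkI
    have hkn : k.val + 1 < n := by have := k.isLt; omega
    set x : Fin n := ⟨k.val, by omega⟩ with hx
    set y : Fin n := ⟨k.val + 1, hkn⟩ with hy
    have hxy : ff I x < ff I y := ff_lt_of_wall k hkI (le_refl _) (by simp [hy])
    have hJxy : ff J x = ff J y := by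
      have hle : ff J x ≤ ff J y := ff_mono (Nat.le_succ k.val)
      rcases eq_or_lt_of_le hle with h | h
      · exact h
      exfalso
      obtain ⟨k', hk', h1, h2⟩ := exists_wall_of_ff_lt h
      have hkk : k' = k := by
        apply Fin.ext
        simp only [hx, hy] at h1 h2
        omega
      rw [hkk] at hk'
      exact hk' hkJ
    obtain ⟨m, hiff, _⟩ := key (ff I x) ⟨x, le_refl _⟩
    have h1 := (hiff x).mp (le_refl _)
    have h3 : ff J y ≤ m := by rw [← hJxy]; exact h1
    have := (hiff y).mpr h3
    omega

end ParabolicGLProof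

open ParabolicGLProof

/-- In `K = GL(n, F_q)`, `q` a power of the prime `p`, for subsets `I, J` of the set of
fundamental roots, the transporter set `N_K(U_I, U_J) = {g : g⁻¹ U_I g ⊆ U_J}` equals
`N_K(U_I) = P_I` when `I ⊇ J`, and is empty otherwise. -/
theorem transporter_unipotent_radicals (p e n : ℕ) [Fact p.Prime] (he : 0 < e)
    (I J : Finset (Fin (n - 1))) :
    (J ⊆ I →
      ({g : Matrix.GeneralLinearGroup (Fin n) (GaloisField p e) |
          ∀ u ∈ U n I, g⁻¹ * u * g ∈ U n J} = P n I ∧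
        {g : Matrix.GeneralLinearGroup (Fin n) (GaloisField p e) |
          ∀ u : Matrix.GeneralLinearGroup (Fin n) (GaloisField p e),
            u ∈ U n I ↔ g * u * g⁻¹ ∈ U n I} = P n I)) ∧
    (¬ J ⊆ I →
      {g : Matrix.GeneralLinearGroup (Fin n) (GaloisField p e) |
        ∀ u ∈ U n I, g⁻¹ * u * g ∈ U n J} = ∅) := by
  constructor
  · intro hJI
    constructor
    · ext g
      simp only [Set.mem_setOf_eq]
      constructor
      · intro H
        exact mem_P_iff.mpr (hard H).1
      · intro hg u hu
        exact easy hJI (mem_P_iff.mp hg) hu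
    · ext g
      simp only [Set.mem_setOf_eq]
      constructor
      · intro H
        have H' : ∀ u ∈ U n I, g⁻¹ * u * g ∈ U n I := by
          intro u hu
          apply (H (g⁻¹ * u * g)).mpr
          have hgu : g * (g⁻¹ * u * g) * g⁻¹ = u := by group
          rw [hgu]
          exact hu
        exact mem_P_iff.mpr (hard H').1
      · intro hg u
        have hgbt := mem_P_iff.mp hg
        have hginvbt := inv_blockTriangular hgbt
        constructor
        · intro hu
          have := easy (Finset.Subset.refl I) (g := g⁻¹)
            (u := u) hginvbt hu
          rwa [inv_inv] at this
        · intro hu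
          have := easy (Finset.Subset.refl I) (g := g) (u := g * u * g⁻¹) hgbt hu
          have hgu : g⁻¹ * (g * u * g⁻¹) * g = u := by group
          rwa [hgu] at this
  · intro hJI
    ext g
    simp only [Set.mem_setOf_eq, Set.mem_empty_iff_false, iff_false]
    intro H
    exact hJI (hard H).2
end

section
/- Solomon's identity for GL(n, F_q): Σ_{J ⊆ Π} (-1)^{|J|} |GL(n,F_q) : P_J| = q^{n(n-1)/2}, where Π is the set of n-1 fundamental roots and P_J ranges over the standard parabolic subgroups. -/
open ParabolicGL Finset Matrix

set_option linter.unusedSectionVars false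
set_option maxHeartbeats 1000000

namespace SolomonAux

variable (q : ℚ)

/-- `∏_{i=1}^m (q^i - 1)`. -/
def fq (m : ℕ) : ℚ := ∏ i ∈ range m, (q ^ (i + 1) - 1)

lemma fq_succ (m : ℕ) : fq q (m + 1) = fq q m * (q ^ (m + 1) - 1) :=
  prod_range_succ _ _

lemma fq_pos (hq : 2 ≤ q) (m : ℕ) : 0 < fq q m := by
  refine Finset.prod_pos fun i _ => ?_
  have : (1:ℚ) < q ^ (i + 1) := one_lt_pow₀ (by linarith) (by omega)
  linarith

/-- Gaussian binomial coefficients via the `q`-Pascal rule. -/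
def B : ℕ → ℕ → ℚ
  | 0, 0 => 1
  | 0, _ + 1 => 0
  | _ + 1, 0 => 1
  | n + 1, k + 1 => B n k + q ^ (k + 1) * B n (k + 1)

lemma B_eq_zero : ∀ {n k : ℕ}, n < k → B q n k = 0
  | 0, _ + 1, _ => rfl
  | n + 1, k + 1, h => by
    rw [B, B_eq_zero (by omega), B_eq_zero (by omega)]; ring

lemma B_mul : ∀ {n k : ℕ}, k ≤ n → B q n k * (fq q k * fq q (n - k)) = fq q n
  | 0, 0, _ => by simp [B, fq]
  | n + 1, 0, _ => by simp [B, fq]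
  | n + 1, k + 1, h => by
    have hkn : k ≤ n := by omega
    obtain ⟨d, rfl⟩ : ∃ d, n = k + d := ⟨n - k, by omega⟩
    rcases Nat.eq_zero_or_pos d with rfl | hd
    · have h1 := B_mul hkn
      have hz := B_eq_zero q (show k < k + 1 by omega)
      rw [B, hz]
      simp only [Nat.add_sub_cancel_left, Nat.add_sub_cancel, Nat.sub_self, Nat.add_zero] at h1 ⊢
      rw [fq_succ]
      simp only [fq, range_zero, prod_empty] at h1 ⊢
      rw [mul_one] at h1
      linear_combination (q ^ (k + 1) - 1) * h1
    · obtain ⟨d', rfl⟩ : ∃ d', d = d' + 1 := ⟨d - 1, by omega⟩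
      have h1 := B_mul (show k ≤ k + (d' + 1) by omega)
      have h2 := B_mul (show k + 1 ≤ k + (d' + 1) by omega)
      have e1 : k + (d' + 1) - k = d' + 1 := by omega
      have e2 : k + (d' + 1) - (k + 1) = d' := by omega
      have e3 : k + (d' + 1) + 1 - (k + 1) = d' + 1 := by omega
      rw [e1] at h1; rw [e2] at h2
      rw [B, e3, fq_succ q (k + (d' + 1)), fq_succ q k, fq_succ q d']
      rw [fq_succ q k] at h2
      rw [fq_succ q d'] at h1
      have hp : q ^ (k + (d' + 1) + 1) = q ^ (k + 1) * q ^ (d' + 1) := by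
        rw [← pow_add]; ring_nf
      rw [hp]
      linear_combination (q ^ (k + 1) - 1) * h1 + q ^ (k + 1) * (q ^ (d' + 1) - 1) * h2

lemma B_self : ∀ n, B q n n = 1
  | 0 => rfl
  | n + 1 => by rw [B, B_self n, B_eq_zero q (by omega)]; ring

lemma B_zero : ∀ n, B q n 0 = 1
  | 0 => rfl
  | _ + 1 => rfl

/-- The alternating sum identity `∑_j (-1)^j q^{C(j,2)} [n choose j]_q = 0` for `n ≥ 1`. -/
lemma alt_sum_B (n : ℕ) :
    ∑ j ∈ range (n + 2), (-1 : ℚ) ^ j * q ^ (j.choose 2) * B q (n + 1) j = 0 := by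
  rw [Finset.sum_range_succ' (fun j => (-1 : ℚ) ^ j * q ^ (j.choose 2) * B q (n + 1) j)]
  set g : ℕ → ℚ := fun j => (-1 : ℚ) ^ j * q ^ (j.choose 2 + j) * B q n j with hg
  have hstep : ∀ j ∈ range (n + 1),
      (-1 : ℚ) ^ (j + 1) * q ^ ((j+1).choose 2) * B q (n + 1) (j + 1) = g (j + 1) - g j := by
    intro j _
    have hB : B q (n + 1) (j + 1) = B q n j + q ^ (j + 1) * B q n (j + 1) := rfl
    have hc : (j + 1).choose 2 = j.choose 2 + j := by
      rw [Nat.choose_succ_succ, Nat.choose_one_right, Nat.add_comm]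
    have hc2 : (j+1).choose 2 + (j+1) = j.choose 2 + j + (j + 1) := by omega
    rw [hB, hg]
    simp only [hc, hc2, pow_add, pow_succ]
    ring
  rw [Finset.sum_congr rfl hstep, Finset.sum_range_sub g]
  have h1 : g (n + 1) = 0 := by simp [hg, B_eq_zero q (show n < n + 1 by omega)]
  have h2 : g 0 = 1 := by simp [hg, B_zero]
  have h3 : B q (n+1) 0 = 1 := B_zero q _
  rw [h1, h2, h3]
  simp


lemma key_binom (hq : 2 ≤ q) (n : ℕ) (hn : 1 ≤ n) :
    ∑ j ∈ range (n + 1), (-1 : ℚ) ^ j * q ^ (j.choose 2) / (fq q j * fq q (n - j)) = 0 := by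
  obtain ⟨m, rfl⟩ : ∃ m, n = m + 1 := ⟨n - 1, by omega⟩
  have halt := alt_sum_B q m
  have hterm : ∀ j ∈ range (m + 2),
      (-1 : ℚ) ^ j * q ^ (j.choose 2) / (fq q j * fq q (m + 1 - j)) =
      ((-1 : ℚ) ^ j * q ^ (j.choose 2) * B q (m + 1) j) / fq q (m + 1) := by
    intro j hj
    have hj' : j ≤ m + 1 := by rw [mem_range] at hj; omega
    have hB := B_mul q hj'
    have h1 : fq q j ≠ 0 := ne_of_gt (fq_pos q hq j)
    have h2 : fq q (m + 1 - j) ≠ 0 := ne_of_gt (fq_pos q hq _)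
    have h3 : fq q (m + 1) ≠ 0 := ne_of_gt (fq_pos q hq _)
    rw [div_eq_div_iff (mul_ne_zero h1 h2) h3, ← hB]
    ring
  rw [Finset.sum_congr rfl hterm, ← Finset.sum_div, halt, zero_div]

/-! ### Walls combinatorics over `ℕ` -/

/-- Number of `j ≤ i` lying in the same block as `i` for the wall set `W`. -/
def sW (W : Finset ℕ) (i : ℕ) : ℕ :=
  ((range (i + 1)).filter (fun j => ∀ k ∈ Finset.Ico j i, k ∉ W)).card

lemma one_le_sW (W : Finset ℕ) (i : ℕ) : 1 ≤ sW W i := by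
  refine card_pos.mpr ⟨i, mem_filter.mpr ⟨self_mem_range_succ i, ?_⟩⟩
  intro k hk; simp at hk

lemma sW_empty (i : ℕ) : sW ∅ i = i + 1 := by
  have h : ((range (i + 1)).filter fun j => ∀ k ∈ Finset.Ico j i, k ∉ (∅ : Finset ℕ)) =
      range (i + 1) := Finset.filter_true_of_mem (by intro j _; simp)
  rw [sW, h, card_range]

lemma sW_insert_le {W : Finset ℕ} {w i : ℕ} (h : i ≤ w) :
    sW (insert w W) i = sW W i := by
  unfold sW
  congr 1
  refine Finset.filter_congr fun j hj => ?_
  constructor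
  · intro hall k hk hkW
    exact hall k hk (Finset.mem_insert_of_mem hkW)
  · intro hall k hk hkW
    rw [Finset.mem_Ico] at hk
    rcases Finset.mem_insert.mp hkW with rfl | hmem
    · omega
    · exact hall k (Finset.mem_Ico.mpr hk) hmem

lemma sW_insert_gt {W : Finset ℕ} {w i : ℕ} (hW : W ⊆ range w) (h : w < i) :
    sW (insert w W) i = i - w := by
  rw [sW]
  have he : (range (i + 1)).filter (fun j => ∀ k ∈ Finset.Ico j i, k ∉ insert w W) =
      Finset.Ico (w + 1) (i + 1) := by
    ext j
    simp only [mem_filter, mem_range, Finset.mem_Ico]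
    constructor
    · rintro ⟨hj, hall⟩
      refine ⟨?_, hj⟩
      by_contra hjw
      exact hall w ⟨by omega, h⟩ (Finset.mem_insert_self _ _)
    · rintro ⟨hwj, hj⟩
      refine ⟨hj, fun k hk hmem => ?_⟩
      rcases Finset.mem_insert.mp hmem with rfl | hkW
      · omega
      · have := hW hkW; rw [mem_range] at this; omega
  rw [he, Nat.card_Ico]
  omega

/-- The product `∏_blocks fq(m_c)` determined by the wall set `W` on `[0, n)`. -/
def pb (n : ℕ) (W : Finset ℕ) : ℚ := ∏ i ∈ range n, (q ^ sW W i - 1)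

lemma pb_empty (n : ℕ) : pb q n ∅ = fq q n :=
  Finset.prod_congr rfl fun i _ => by rw [sW_empty]

lemma pb_pos (hq : 2 ≤ q) (n : ℕ) (W : Finset ℕ) : 0 < pb q n W := by
  refine Finset.prod_pos fun i _ => ?_
  have : (1 : ℚ) < q ^ sW W i := one_lt_pow₀ (by linarith) (by have := one_le_sW W i; omega)
  linarith

lemma pb_insert {w n : ℕ} {W : Finset ℕ} (hW : W ⊆ range w) (hw : w < n) :
    pb q n (insert w W) = pb q (w + 1) W * fq q (n - 1 - w) := by
  obtain ⟨d, rfl⟩ : ∃ d, n = w + 1 + d := ⟨n - (w + 1), by omega⟩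
  have hd : w + 1 + d - 1 - w = d := by omega
  rw [pb, Finset.prod_range_add, hd]
  congr 1
  · exact Finset.prod_congr rfl fun i hi => by
      rw [sW_insert_le (by rw [mem_range] at hi; omega)]
  · refine Finset.prod_congr rfl fun i _ => ?_
    rw [sW_insert_gt hW (by omega)]
    congr 2
    omega

lemma sum_powerset_decomp (f : Finset ℕ → ℚ) (n : ℕ) :
    ∑ W ∈ (range n).powerset, f W =
      f ∅ + ∑ w ∈ range n, ∑ W ∈ (range w).powerset, f (insert w W) := by
  induction n with
  | zero => simp
  | succ n ih =>
    have hinj : ∀ W1 ∈ (range n).powerset, ∀ W2 ∈ (range n).powerset,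
        insert n W1 = insert n W2 → W1 = W2 := by
      intro W1 h1 W2 h2 he
      have hn1 : n ∉ W1 := fun h => by
        have := Finset.mem_powerset.mp h1 h; rw [mem_range] at this; omega
      have hn2 : n ∉ W2 := fun h => by
        have := Finset.mem_powerset.mp h2 h; rw [mem_range] at this; omega
      rw [← Finset.erase_insert hn1, he, Finset.erase_insert hn2]
    have hdisj : Disjoint (range n).powerset ((range n).powerset.image (insert n)) := by
      rw [Finset.disjoint_left]
      intro W hW hW2
      have hn1 : n ∉ W := fun h => by
        have := Finset.mem_powerset.mp hW h; rw [mem_range] at this; omega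
      obtain ⟨W2, _, rfl⟩ := Finset.mem_image.mp hW2
      exact hn1 (Finset.mem_insert_self _ _)
    rw [Finset.sum_range_succ, Finset.range_add_one, Finset.powerset_insert,
      Finset.sum_union hdisj, ih, Finset.sum_image hinj]
    ring

lemma key (hq : 2 ≤ q) : ∀ n, 1 ≤ n →
    ∑ W ∈ (range (n - 1)).powerset, (-1 : ℚ) ^ W.card / pb q n W =
      (-1 : ℚ) ^ (n - 1) * q ^ n.choose 2 / fq q n := by
  intro n
  induction n using Nat.strong_induction_on with
  | _ n IH =>
  intro hn
  have hfq0 : fq q 0 = 1 := by simp [fq]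
  rw [sum_powerset_decomp (fun W => (-1 : ℚ) ^ W.card / pb q n W)]
  set t : ℕ → ℚ := fun j => (-1 : ℚ) ^ j * q ^ (j.choose 2) / (fq q j * fq q (n - j)) with ht
  have hinner : ∀ w ∈ range (n - 1),
      ∑ W ∈ (range w).powerset, (-1 : ℚ) ^ (insert w W).card / pb q n (insert w W) =
        t (w + 1) := by
    intro w hw
    rw [mem_range] at hw
    have hterm : ∀ W ∈ (range w).powerset,
        (-1 : ℚ) ^ (insert w W).card / pb q n (insert w W) =
          (-1 : ℚ) ^ W.card / pb q (w + 1) W * (-1 / fq q (n - 1 - w)) := by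
      intro W hW
      rw [Finset.mem_powerset] at hW
      have hwW : w ∉ W := fun h => by have := hW h; rw [mem_range] at this; omega
      rw [Finset.card_insert_of_notMem hwW, pb_insert q hW (by omega), pow_succ]
      have h1 : pb q (w + 1) W ≠ 0 := ne_of_gt (pb_pos q hq _ _)
      have h2 : fq q (n - 1 - w) ≠ 0 := ne_of_gt (fq_pos q hq _)
      field_simp
    have hIH := IH (w + 1) (by omega) (by omega)
    simp only [Nat.add_sub_cancel] at hIH
    rw [Finset.sum_congr rfl hterm, ← Finset.sum_mul, hIH]
    simp only [ht]
    have e2 : n - (w + 1) = n - 1 - w := by omega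
    rw [e2]
    have h1 : fq q (w + 1) ≠ 0 := ne_of_gt (fq_pos q hq _)
    have h2 : fq q (n - 1 - w) ≠ 0 := ne_of_gt (fq_pos q hq _)
    rw [pow_succ]
    field_simp
  rw [Finset.sum_congr rfl hinner]
  have hfirst : ((-1 : ℚ) ^ (∅ : Finset ℕ).card / pb q n ∅) = t 0 := by
    simp only [ht]
    rw [pb_empty]
    simp [hfq0]
  rw [hfirst]
  obtain ⟨m, rfl⟩ : ∃ m, n = m + 1 := ⟨n - 1, by omega⟩
  simp only [Nat.add_sub_cancel]
  have hkb : ∑ j ∈ range (m + 1 + 1), t j = 0 := key_binom q hq (m + 1) (by omega)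
  rw [Finset.sum_range_succ, Finset.sum_range_succ'] at hkb
  have hgoal : t 0 + ∑ w ∈ range m, t (w + 1) = - t (m + 1) := by linarith
  rw [hgoal]
  simp only [ht]
  rw [Nat.sub_self, hfq0, pow_succ]
  have h3 : fq q (m + 1) ≠ 0 := ne_of_gt (fq_pos q hq _)
  field_simp

end SolomonAux



namespace SolomonAux

variable {F : Type*} [Field F] [Fintype F] [DecidableEq F]

/-- Units of a matrix ring are matrices with nonzero determinant. -/
noncomputable def unitsEquiv (K : Type*) [Fintype K] [DecidableEq K] :
    {A : Matrix K K F // A.det ≠ 0} ≃ (Matrix K K F)ˣ where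
  toFun A := ((Matrix.isUnit_iff_isUnit_det A.val).mpr (isUnit_iff_ne_zero.mpr A.2)).unit
  invFun U := ⟨U.val, by
    have hu : IsUnit (U.val : Matrix K K F) := ⟨U, rfl⟩
    exact ((Matrix.isUnit_iff_isUnit_det _).mp hu).ne_zero⟩
  left_inv A := Subtype.ext rfl
  right_inv U := Units.ext rfl

variable {N : ℕ}

section blockdecomp

variable (b : Fin N → ℕ)

/-- Rebuild a block triangular matrix from diagonal blocks and upper entries. -/
def buildM
    (g : ∀ c : (univ.image b : Finset ℕ),
      {A : Matrix {x : Fin N // b x = (c : ℕ)} {x : Fin N // b x = (c : ℕ)} F // A.det ≠ 0})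
    (f : {ij : Fin N × Fin N // b ij.1 < b ij.2} → F) :
    Matrix (Fin N) (Fin N) F := fun i j =>
  if h : b i = b j then (g ⟨b j, mem_image_of_mem b (mem_univ j)⟩).val ⟨i, h⟩ ⟨j, rfl⟩
  else if h' : b i < b j then f ⟨(i, j), h'⟩ else 0

variable
  (g : ∀ c : (univ.image b : Finset ℕ),
      {A : Matrix {x : Fin N // b x = (c : ℕ)} {x : Fin N // b x = (c : ℕ)} F // A.det ≠ 0})
  (f : {ij : Fin N × Fin N // b ij.1 < b ij.2} → F)

lemma buildM_bt : (buildM b g f).BlockTriangular b := by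
  intro i j hji
  show (if h : b i = b j then _ else if h' : b i < b j then _ else 0) = 0
  rw [dif_neg (by omega), dif_neg (by omega)]

lemma buildM_sq (c : ℕ) (hc : c ∈ univ.image b) :
    (buildM b g f).toSquareBlock b c = (g ⟨c, hc⟩).val := by
  ext ⟨i, hi⟩ ⟨j, hj⟩
  have hij : b i = b j := hi.trans hj.symm
  show buildM b g f i j = _
  subst hj
  show (if h : b i = b j then _ else if h' : b i < b j then _ else 0) = _
  rw [dif_pos hij]

lemma buildM_det : (buildM b g f).det ≠ 0 := by
  rw [(buildM_bt b g f).det, Finset.prod_ne_zero_iff]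
  intro c hc
  rw [buildM_sq b g f c hc]
  exact (g ⟨c, hc⟩).2

/-- The block decomposition of the set of invertible block-triangular matrices. -/
noncomputable def blEquiv :
    {M : Matrix (Fin N) (Fin N) F // M.BlockTriangular b ∧ M.det ≠ 0} ≃
      (∀ c : (univ.image b : Finset ℕ),
        {A : Matrix {x : Fin N // b x = (c : ℕ)} {x : Fin N // b x = (c : ℕ)} F // A.det ≠ 0}) ×
      ({ij : Fin N × Fin N // b ij.1 < b ij.2} → F) where
  toFun M :=
    ⟨fun c => ⟨M.val.toSquareBlock b c, by
        have hd := M.2.1.det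
        have h2 := M.2.2
        rw [hd, Finset.prod_ne_zero_iff] at h2
        exact h2 c c.2⟩,
      fun ij => M.val ij.val.1 ij.val.2⟩
  invFun gf := ⟨buildM b gf.1 gf.2, buildM_bt b _ _, buildM_det b _ _⟩
  left_inv M := by
    refine Subtype.ext ?_
    funext i j
    show (if h : b i = b j then _ else if h' : b i < b j then _ else 0) = M.val i j
    split_ifs with h h'
    · rfl
    · rfl
    · exact (M.2.1 (by omega)).symm
  right_inv gf := by
    refine Prod.ext ?_ ?_
    · funext c
      exact Subtype.ext (buildM_sq b gf.1 gf.2 c c.2)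
    · funext ij
      show (if h : b ij.val.1 = b ij.val.2 then _ else if h' : b ij.val.1 < b ij.val.2 then _ else 0)
          = gf.2 ij
      rw [dif_neg (by have := ij.2; omega), dif_pos ij.2]

/-- Cardinality of the set of invertible matrices over a finite field. -/
lemma card_invertible (K : Type*) [Fintype K] [DecidableEq K] :
    Nat.card {A : Matrix K K F // A.det ≠ 0} =
      ∏ i ∈ range (Fintype.card K), (Fintype.card F ^ Fintype.card K - Fintype.card F ^ i) := by
  rw [Nat.card_congr (unitsEquiv K)]
  have e := Fintype.equivFin K
  have re : (Matrix K K F) ≃* Matrix (Fin (Fintype.card K)) (Fin (Fintype.card K)) F :=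
    (Matrix.reindexAlgEquiv F F e).toRingEquiv.toMulEquiv
  rw [Nat.card_congr (Units.mapEquiv re).toEquiv, Matrix.card_GL_field,
    ← Fin.prod_univ_eq_prod_range (fun i => Fintype.card F ^ Fintype.card K - Fintype.card F ^ i)]

/-- The cardinality of invertible block triangular matrices. -/
lemma card_bt :
    Nat.card {M : Matrix (Fin N) (Fin N) F // M.BlockTriangular b ∧ M.det ≠ 0} =
      (∏ c ∈ univ.image b,
        ∏ i ∈ range ((univ.filter (fun x => b x = c)).card),
          (Fintype.card F ^ ((univ.filter (fun x => b x = c)).card) - Fintype.card F ^ i)) *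
      Fintype.card F ^ (Nat.card {ij : Fin N × Fin N // b ij.1 < b ij.2}) := by
  rw [Nat.card_congr (blEquiv b), Nat.card_prod, Nat.card_pi, Nat.card_fun,
    Nat.card_eq_fintype_card (α := F)]
  congr 1
  have h1 : ∀ cv : ℕ,
      Nat.card {A : Matrix {x : Fin N // b x = cv} {x : Fin N // b x = cv} F // A.det ≠ 0} =
        ∏ i ∈ range ((univ.filter (fun x => b x = cv)).card),
          (Fintype.card F ^ ((univ.filter (fun x => b x = cv)).card) - Fintype.card F ^ i) := by
    intro cv
    rw [card_invertible, Fintype.card_subtype]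
  calc (∏ c : (univ.image b : Finset ℕ),
        Nat.card {A : Matrix {x : Fin N // b x = (c : ℕ)} {x : Fin N // b x = (c : ℕ)} F //
          A.det ≠ 0})
      = ∏ c ∈ univ.image b,
        Nat.card {A : Matrix {x : Fin N // b x = c} {x : Fin N // b x = c} F // A.det ≠ 0} :=
        Finset.prod_coe_sort (univ.image b) (fun cv =>
          Nat.card {A : Matrix {x : Fin N // b x = cv} {x : Fin N // b x = cv} F // A.det ≠ 0})
    _ = _ := Finset.prod_congr rfl fun c _ => h1 c

/-! ### Fiber statistics of `b` -/

/-- Number of indices `i ≤ j` in the same `b`-fiber as `j`. -/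
def sb (b : Fin N → ℕ) (j : Fin N) : ℕ := (univ.filter (fun i => b i = b j ∧ i ≤ j)).card

lemma one_le_sb (j : Fin N) : 1 ≤ sb b j :=
  card_pos.mpr ⟨j, mem_filter.mpr ⟨mem_univ j, rfl, le_refl j⟩⟩

lemma sb_le_fiber (j : Fin N) : sb b j ≤ (univ.filter (fun i => b i = b j)).card :=
  card_le_card (fun x hx => by
    rw [mem_filter] at hx ⊢
    exact ⟨hx.1, hx.2.1⟩)

lemma sb_strict {i j : Fin N} (hij : i < j) (hb : b i = b j) : sb b i < sb b j := by
  apply Finset.card_lt_card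
  constructor
  · intro x hx
    rw [mem_filter] at hx ⊢
    exact ⟨hx.1, hx.2.1.trans hb, le_trans hx.2.2 (le_of_lt hij)⟩
  · intro hsub
    have hj : j ∈ univ.filter (fun x => b x = b j ∧ x ≤ j) :=
      mem_filter.mpr ⟨mem_univ j, rfl, le_refl j⟩
    have := hsub hj
    rw [mem_filter] at this
    exact absurd this.2.2 (not_le.mpr hij)

lemma sb_injOn (c : ℕ) : ∀ x ∈ univ.filter (fun j => b j = c), ∀ y ∈ univ.filter (fun j => b j = c),
    sb b x - 1 = sb b y - 1 → x = y := by
  intro x hx y hy hxy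
  rw [mem_filter] at hx hy
  have h1 := one_le_sb b x
  have h2 := one_le_sb b y
  rcases lt_trichotomy x y with h | h | h
  · have := sb_strict b h (hx.2.trans hy.2.symm); omega
  · exact h
  · have := sb_strict b h (hy.2.trans hx.2.symm); omega

lemma sb_image (c : ℕ) :
    (univ.filter (fun j => b j = c)).image (fun j => sb b j - 1) =
      range ((univ.filter (fun j => b j = c)).card) := by
  apply Finset.eq_of_subset_of_card_le
  · intro t ht
    rw [Finset.mem_image] at ht
    obtain ⟨j, hj, rfl⟩ := ht
    rw [mem_range]
    have h1 := one_le_sb b j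
    have h2 := sb_le_fiber b j
    have hbj : b j = c := (mem_filter.mp hj).2
    have : (univ.filter (fun i => b i = b j)).card = (univ.filter (fun i => b i = c)).card := by
      rw [hbj]
    omega
  · rw [card_range, Finset.card_image_of_injOn (fun x hx y hy => sb_injOn b c x hx y hy)]

lemma fiber_prod {M : Type*} [CommMonoid M] (g : ℕ → M) (c : ℕ) :
    ∏ j ∈ univ.filter (fun j => b j = c), g (sb b j) =
      ∏ t ∈ range ((univ.filter (fun j => b j = c)).card), g (t + 1) := by
  have h1 : ∀ j ∈ univ.filter (fun j => b j = c), g (sb b j) = g ((sb b j - 1) + 1) := by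
    intro j _
    rw [Nat.sub_add_cancel (one_le_sb b j)]
  have h2 := Finset.prod_image (s := univ.filter (fun j => b j = c))
    (g := fun j => sb b j - 1) (f := fun t => g (t + 1))
    (fun x hx y hy => sb_injOn b c x hx y hy)
  rw [Finset.prod_congr rfl h1, ← h2, sb_image]

lemma fiber_sum (g : ℕ → ℕ) (c : ℕ) :
    ∑ j ∈ univ.filter (fun j => b j = c), g (sb b j) =
      ∑ t ∈ range ((univ.filter (fun j => b j = c)).card), g (t + 1) := by
  have h1 : ∀ j ∈ univ.filter (fun j => b j = c), g (sb b j) = g ((sb b j - 1) + 1) := by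
    intro j _
    rw [Nat.sub_add_cancel (one_le_sb b j)]
  have h2 := Finset.sum_image (s := univ.filter (fun j => b j = c))
    (g := fun j => sb b j - 1) (f := fun t => g (t + 1))
    (fun x hx y hy => sb_injOn b c x hx y hy)
  rw [Finset.sum_congr rfl h1, ← h2, sb_image]

lemma filter_lt_card (hb : Monotone b) (j : Fin N) :
    (univ.filter (fun i => b i < b j)).card + (sb b j - 1) = (j : ℕ) := by
  have hins : univ.filter (fun i => b i = b j ∧ i ≤ j) =
      insert j (univ.filter (fun i => b i = b j ∧ i < j)) := by
    ext i
    simp only [mem_filter, Finset.mem_insert, mem_univ, true_and]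
    constructor
    · rintro ⟨h1, h2⟩
      rcases eq_or_lt_of_le h2 with rfl | h3
      · exact Or.inl rfl
      · exact Or.inr ⟨h1, h3⟩
    · rintro (rfl | ⟨h1, h2⟩)
      · exact ⟨rfl, le_refl _⟩
      · exact ⟨h1, le_of_lt h2⟩
  have hjn : j ∉ univ.filter (fun i => b i = b j ∧ i < j) := by
    rw [mem_filter]
    rintro ⟨-, -, h⟩
    exact absurd h (lt_irrefl j)
  have hsb : sb b j = (univ.filter (fun i => b i = b j ∧ i < j)).card + 1 := by
    rw [sb, hins, Finset.card_insert_of_notMem hjn]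
  have hunion : univ.filter (fun i => i < j) =
      univ.filter (fun i => b i < b j) ∪ univ.filter (fun i => b i = b j ∧ i < j) := by
    ext i
    simp only [mem_filter, Finset.mem_union, mem_univ, true_and]
    constructor
    · intro h
      rcases lt_or_eq_of_le (hb (le_of_lt h)) with h1 | h1
      · exact Or.inl h1
      · exact Or.inr ⟨h1, h⟩
    · rintro (h | ⟨-, h⟩)
      · by_contra hc
        exact absurd (hb (not_lt.mp hc)) (not_le.mpr h)
      · exact h
  have hdisj : Disjoint (univ.filter (fun i => b i < b j))
      (univ.filter (fun i => b i = b j ∧ i < j)) := by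
    rw [Finset.disjoint_left]
    intro i h1 h2
    rw [mem_filter] at h1 h2
    omega
  have hIio : (univ.filter (fun i => i < j)).card = (j : ℕ) := by
    have : univ.filter (fun i : Fin N => i < j) = Finset.Iio j := by
      ext i; simp [Finset.mem_Iio]
    rw [this, Fin.card_Iio]
  rw [← hIio, hunion, Finset.card_union_of_disjoint hdisj]
  omega

lemma exp_lemma (hb : Monotone b) :
    Nat.card {ij : Fin N × Fin N // b ij.1 < b ij.2} +
      ∑ c ∈ univ.image b, ∑ t ∈ range ((univ.filter (fun x => b x = c)).card), t =
    ∑ i ∈ range N, i := by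
  have e1 : {ij : Fin N × Fin N // b ij.1 < b ij.2} ≃ Σ j : Fin N, {i : Fin N // b i < b j} :=
    ⟨fun x => ⟨x.val.2, x.val.1, x.2⟩, fun y => ⟨(y.2.val, y.1), y.2.2⟩,
      fun x => rfl, fun y => rfl⟩
  rw [Nat.card_congr e1, Nat.card_eq_fintype_card, Fintype.card_sigma]
  have e2 : ∀ j : Fin N, Fintype.card {i : Fin N // b i < b j} =
      (univ.filter (fun i => b i < b j)).card := fun j => Fintype.card_subtype _
  have e3 : ∑ c ∈ univ.image b, ∑ t ∈ range ((univ.filter (fun x => b x = c)).card), t =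
      ∑ j : Fin N, (sb b j - 1) := by
    have e4 : ∀ c ∈ univ.image b,
        ∑ t ∈ range ((univ.filter (fun x => b x = c)).card), t =
          ∑ j ∈ univ.filter (fun j => b j = c), (sb b j - 1) := by
      intro c _
      rw [fiber_sum b (fun t => t - 1) c]
      exact (Finset.sum_congr rfl fun t _ => by omega).symm
    rw [Finset.sum_congr rfl e4,
      Finset.sum_fiberwise_of_maps_to (fun j _ => mem_image_of_mem b (mem_univ j))]
  rw [e3, Finset.sum_congr rfl (fun j _ => e2 j), ← Finset.sum_add_distrib]
  rw [Finset.sum_congr rfl (fun j _ => filter_lt_card b hb j)]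
  rw [← Fin.sum_univ_eq_sum_range (fun i => i) N]

/-- The `ℚ`-valued cardinality formula for invertible block triangular matrices. -/
lemma card_bt_q (b : Fin N → ℕ) (hb : Monotone b) :
    (Nat.card {M : Matrix (Fin N) (Fin N) F // M.BlockTriangular b ∧ M.det ≠ 0} : ℚ) =
      (Fintype.card F : ℚ) ^ (∑ i ∈ range N, i) *
        ∏ j : Fin N, ((Fintype.card F : ℚ) ^ (sb b j) - 1) := by
  have hq1 : 1 ≤ Fintype.card F := Fintype.card_pos
  set q : ℕ := Fintype.card F with hqdef
  rw [card_bt]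
  have hA : ∀ m : ℕ, (∏ i ∈ range m, ((q : ℚ) ^ m - (q : ℚ) ^ i)) =
      (q : ℚ) ^ (∑ i ∈ range m, i) * ∏ t ∈ range m, ((q : ℚ) ^ (t + 1) - 1) := by
    intro m
    have h1 : ∀ i ∈ range m, ((q : ℚ) ^ m - (q : ℚ) ^ i) =
        (q : ℚ) ^ i * ((q : ℚ) ^ (m - i) - 1) := by
      intro i hi
      rw [mem_range] at hi
      rw [mul_sub, mul_one, ← pow_add]
      congr 2
      omega
    rw [Finset.prod_congr rfl h1, Finset.prod_mul_distrib, Finset.prod_pow_eq_pow_sum]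
    congr 1
    have h2 : ∀ i ∈ range m, ((q : ℚ) ^ (m - i) - 1) =
        (fun t => ((q : ℚ) ^ (t + 1) - 1)) (m - 1 - i) := by
      intro i hi
      rw [mem_range] at hi
      simp only
      congr 2
      omega
    rw [Finset.prod_congr rfl h2, Finset.prod_range_reflect (fun t => ((q : ℚ) ^ (t + 1) - 1)) m]
  -- cast the natural subtraction
  have hcast : ∀ c ∈ univ.image b,
      ((∏ i ∈ range ((univ.filter (fun x => b x = c)).card),
        (q ^ ((univ.filter (fun x => b x = c)).card) - q ^ i) : ℕ) : ℚ) =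
      ∏ i ∈ range ((univ.filter (fun x => b x = c)).card),
        ((q : ℚ) ^ ((univ.filter (fun x => b x = c)).card) - (q : ℚ) ^ i) := by
    intro c _
    rw [Nat.cast_prod]
    refine Finset.prod_congr rfl fun i hi => ?_
    rw [mem_range] at hi
    have : q ^ i ≤ q ^ ((univ.filter (fun x => b x = c)).card) :=
      Nat.pow_le_pow_right hq1 (by omega)
    push_cast [Nat.cast_sub this]
    ring
  rw [Nat.cast_mul, Nat.cast_prod, Nat.cast_pow,
    Finset.prod_congr rfl hcast,
    Finset.prod_congr rfl (fun c _ => hA ((univ.filter (fun x => b x = c)).card)),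
    Finset.prod_mul_distrib, Finset.prod_pow_eq_pow_sum]
  have hfib : (∏ c ∈ univ.image b,
      ∏ t ∈ range ((univ.filter (fun x => b x = c)).card), ((q : ℚ) ^ (t + 1) - 1)) =
      ∏ j : Fin N, ((q : ℚ) ^ (sb b j) - 1) := by
    have h4 : ∀ c ∈ univ.image b,
        (∏ t ∈ range ((univ.filter (fun x => b x = c)).card), ((q : ℚ) ^ (t + 1) - 1)) =
          ∏ j ∈ univ.filter (fun j => b j = c), ((q : ℚ) ^ (sb b j) - 1) := by
      intro c _
      have h5 := (fiber_prod b (fun t => (q : ℚ) ^ t - 1) c).symm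
      simpa using h5
    rw [Finset.prod_congr rfl h4,
      Finset.prod_fiberwise_of_maps_to (fun j _ => mem_image_of_mem b (mem_univ j))]
  rw [hfib, ← exp_lemma b hb, pow_add]
  ring

end blockdecomp

end SolomonAux

namespace SolomonAux

variable {F : Type*} [Field F] (n : ℕ) (J : Finset (Fin (n - 1)))

/-- Block index function determined by `J`. -/
def bfun (i : Fin n) : ℕ :=
  ((univ : Finset (Fin (n - 1))).filter (fun k => k ∉ J ∧ (k : ℕ) < (i : ℕ))).card

lemma bfun_mono : Monotone (bfun n J) := fun i j hij =>
  card_le_card (fun k hk => by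
    rw [mem_filter] at hk ⊢
    have h2 : (i : ℕ) ≤ (j : ℕ) := hij
    exact ⟨hk.1, hk.2.1, by omega⟩)

lemma bfun_lt_of_sep {i j : Fin n} (hji : j < i) (hsep : ParabolicGL.Separated n J i j) :
    bfun n J j < bfun n J i := by
  obtain ⟨k, hkJ, hk1, hk2⟩ := hsep
  have hji' : (j : ℕ) < (i : ℕ) := hji
  apply Finset.card_lt_card
  constructor
  · intro x hx
    rw [mem_filter] at hx ⊢
    exact ⟨hx.1, hx.2.1, by omega⟩
  · intro hsub
    have hk : k ∈ univ.filter (fun k : Fin (n-1) => k ∉ J ∧ (k : ℕ) < (i : ℕ)) :=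
      mem_filter.mpr ⟨mem_univ _, hkJ, by omega⟩
    have := hsub hk
    rw [mem_filter] at this
    omega

lemma sep_of_bfun_lt {i j : Fin n} (h : bfun n J j < bfun n J i) :
    j < i ∧ ParabolicGL.Separated n J i j := by
  rw [bfun, bfun] at h
  have hns : ¬ (univ.filter (fun k : Fin (n-1) => k ∉ J ∧ (k : ℕ) < (i : ℕ)) ⊆
      univ.filter (fun k : Fin (n-1) => k ∉ J ∧ (k : ℕ) < (j : ℕ))) := by
    intro hsub
    exact absurd (Finset.card_le_card hsub) (by omega)
  obtain ⟨k, hk1, hk2⟩ := Finset.not_subset.mp hns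
  rw [mem_filter] at hk1 hk2
  push_neg at hk2
  have hjk : (j : ℕ) ≤ (k : ℕ) := by
    by_contra hc
    exact absurd (hk2 (mem_univ _) hk1.2.1) (by omega)
  have hji : (j : ℕ) < (i : ℕ) := by have := hk1.2.2; omega
  exact ⟨hji, k, hk1.2.1, by omega, by omega⟩

lemma mem_P_iff (A : Matrix.GeneralLinearGroup (Fin n) F) :
    A ∈ ParabolicGL.P n J ↔
      Matrix.BlockTriangular (A : Matrix (Fin n) (Fin n) F) (bfun n J) := by
  constructor
  · intro hA i j hb
    obtain ⟨hji, hsep⟩ := sep_of_bfun_lt n J hb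
    exact hA i j hji hsep
  · intro hbt i j hji hsep
    exact hbt (bfun_lt_of_sep n J hji hsep)

/-- The parabolic subgroup as invertible block triangular matrices. -/
noncomputable def PEquiv :
    {M : Matrix (Fin n) (Fin n) F // M.BlockTriangular (bfun n J) ∧ M.det ≠ 0} ≃
      (ParabolicGL.P n J (F := F)) where
  toFun M := ⟨((Matrix.isUnit_iff_isUnit_det M.val).mpr (isUnit_iff_ne_zero.mpr M.2.2)).unit, by
    have hs : (((Matrix.isUnit_iff_isUnit_det M.val).mpr
        (isUnit_iff_ne_zero.mpr M.2.2)).unit : Matrix (Fin n) (Fin n) F) = M.val :=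
      IsUnit.unit_spec _
    refine (mem_P_iff n J _).mpr ?_
    rw [hs]
    exact M.2.1⟩
  invFun A := ⟨A.val, by
      have h1 := (mem_P_iff n J A.val).mp A.2
      refine ⟨h1, ?_⟩
      have hu : IsUnit (A.val : Matrix (Fin n) (Fin n) F) := ⟨A.val, rfl⟩
      exact ((Matrix.isUnit_iff_isUnit_det _).mp hu).ne_zero⟩
  left_inv M := by
    apply Subtype.ext
    show (((Matrix.isUnit_iff_isUnit_det M.val).mpr
      (isUnit_iff_ne_zero.mpr M.2.2)).unit : Matrix (Fin n) (Fin n) F) = M.val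
    exact IsUnit.unit_spec _
  right_inv A := by
    apply Subtype.ext
    apply Units.ext
    show (((Matrix.isUnit_iff_isUnit_det (A.val : Matrix (Fin n) (Fin n) F)).mpr
      (isUnit_iff_ne_zero.mpr (by
        have hu : IsUnit (A.val : Matrix (Fin n) (Fin n) F) := ⟨A.val, rfl⟩
        exact ((Matrix.isUnit_iff_isUnit_det _).mp hu).ne_zero))).unit :
          Matrix (Fin n) (Fin n) F) = (A.val : Matrix (Fin n) (Fin n) F)
    exact IsUnit.unit_spec _

/-- The wall set of `J`, as a set of naturals. -/
def WJ : Finset ℕ := (Jᶜ).image Fin.val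

lemma mem_WJ {k : ℕ} : k ∈ WJ n J ↔ ∃ k' : Fin (n - 1), k' ∉ J ∧ (k' : ℕ) = k := by
  rw [WJ, Finset.mem_image]
  constructor
  · rintro ⟨k', hk', rfl⟩
    exact ⟨k', Finset.mem_compl.mp hk', rfl⟩
  · rintro ⟨k', hk', rfl⟩
    exact ⟨k', Finset.mem_compl.mpr hk', rfl⟩

lemma WJ_mem_powerset : WJ n J ∈ (range (n - 1)).powerset := by
  rw [Finset.mem_powerset]
  intro x hx
  rw [WJ, Finset.mem_image] at hx
  obtain ⟨k', _, rfl⟩ := hx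
  rw [mem_range]
  exact k'.2

lemma WJ_card : (WJ n J).card = (n - 1) - J.card := by
  rw [WJ, Finset.card_image_of_injective _ Fin.val_injective, Finset.card_compl,
    Fintype.card_fin]

lemma psi_phi : univ.filter (fun k : Fin (n - 1) => (k : ℕ) ∉ WJ n J) = J := by
  ext k
  rw [mem_filter, mem_WJ]
  constructor
  · rintro ⟨-, hk⟩
    by_contra hkJ
    exact hk ⟨k, hkJ, rfl⟩
  · intro hkJ
    refine ⟨mem_univ _, ?_⟩
    rintro ⟨k', hk', hv⟩
    exact hk' (by rw [Fin.val_injective hv]; exact hkJ)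

lemma phi_psi (W : Finset ℕ) (hW : W ∈ (range (n - 1)).powerset) :
    WJ n (univ.filter (fun k : Fin (n - 1) => (k : ℕ) ∉ W)) = W := by
  rw [Finset.mem_powerset] at hW
  ext x
  rw [mem_WJ]
  constructor
  · rintro ⟨k', hk', rfl⟩
    by_contra hc
    exact hk' (mem_filter.mpr ⟨mem_univ _, hc⟩)
  · intro hx
    have hxr : x < n - 1 := by have := hW hx; rwa [mem_range] at this
    refine ⟨⟨x, hxr⟩, ?_, rfl⟩
    intro hmem
    exact (mem_filter.mp hmem).2 hx

/-- `sb` of the block function agrees with the wall statistic `sW`. -/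
lemma sb_eq_sW (j : Fin n) : sb (bfun n J) j = sW (WJ n J) (j : ℕ) := by
  rw [sb, sW]
  refine Finset.card_bij (fun i _ => (i : ℕ)) ?_ ?_ ?_
  · intro i hi
    rw [mem_filter] at hi
    obtain ⟨-, hbi, hij⟩ := hi
    have hij' : (i : ℕ) ≤ (j : ℕ) := hij
    rw [mem_filter, mem_range]
    refine ⟨by omega, fun k hk hkW => ?_⟩
    rw [Finset.mem_Ico] at hk
    obtain ⟨k', hk'J, rfl⟩ := (mem_WJ n J).mp hkW
    have hij2 : i < j := by
      rw [Fin.lt_def]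
      omega
    have hlt : bfun n J i < bfun n J j :=
      bfun_lt_of_sep n J hij2 ⟨k', hk'J, by omega, by omega⟩
    omega
  · intro x hx y hy hxy
    exact Fin.val_injective hxy
  · intro iv hiv
    rw [mem_filter, mem_range] at hiv
    obtain ⟨hiv1, hiv2⟩ := hiv
    have hivn : iv < n := by have := j.2; omega
    have hle : (⟨iv, hivn⟩ : Fin n) ≤ j := by
      rw [Fin.le_def]
      exact (show iv ≤ (j : ℕ) by omega)
    refine ⟨⟨iv, hivn⟩, mem_filter.mpr ⟨mem_univ _, ?_, hle⟩, rfl⟩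
    rcases eq_or_lt_of_le (bfun_mono n J hle) with h | h
    · exact h
    · exfalso
      obtain ⟨hlt2, k', hk'J, hmin, hmax⟩ := sep_of_bfun_lt n J h
      have hlt2' : iv < (j : ℕ) := hlt2
      have hmin' : min (j : ℕ) iv ≤ (k' : ℕ) := hmin
      have hmax' : (k' : ℕ) < max (j : ℕ) iv := hmax
      have hk'W : (k' : ℕ) ∈ WJ n J := (mem_WJ n J).mpr ⟨k', hk'J, rfl⟩
      exact hiv2 _ (Finset.mem_Ico.mpr ⟨by omega, by omega⟩) hk'W

end SolomonAux

namespace SolomonAux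

lemma prod_gl_cast (q : ℕ) (hq1 : 1 ≤ q) (m : ℕ) :
    ((∏ i ∈ range m, (q ^ m - q ^ i) : ℕ) : ℚ) =
      (q : ℚ) ^ (∑ i ∈ range m, i) * fq (q : ℚ) m := by
  rw [Nat.cast_prod, fq]
  have hc : ∀ i ∈ range m, ((q ^ m - q ^ i : ℕ) : ℚ) = ((q : ℚ) ^ m - (q : ℚ) ^ i) := by
    intro i hi
    rw [mem_range] at hi
    have : q ^ i ≤ q ^ m := Nat.pow_le_pow_right hq1 (by omega)
    push_cast [Nat.cast_sub this]
    ring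
  rw [Finset.prod_congr rfl hc]
  have h1 : ∀ i ∈ range m, ((q : ℚ) ^ m - (q : ℚ) ^ i) =
      (q : ℚ) ^ i * ((q : ℚ) ^ (m - i) - 1) := by
    intro i hi
    rw [mem_range] at hi
    rw [mul_sub, mul_one, ← pow_add]
    congr 2
    omega
  rw [Finset.prod_congr rfl h1, Finset.prod_mul_distrib, Finset.prod_pow_eq_pow_sum]
  congr 1
  have h2 : ∀ i ∈ range m, ((q : ℚ) ^ (m - i) - 1) =
      (fun t => ((q : ℚ) ^ (t + 1) - 1)) (m - 1 - i) := by
    intro i hi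
    rw [mem_range] at hi
    simp only
    congr 2
    omega
  rw [Finset.prod_congr rfl h2, Finset.prod_range_reflect (fun t => ((q : ℚ) ^ (t + 1) - 1)) m]

end SolomonAux


open SolomonAux in
/-- **Solomon's identity for `GL(n, F_q)`:**
`∑_{J ⊆ Π} (-1)^{|J|} |GL(n,F_q) : P_J| = q^{n(n-1)/2}`, the sum over all subsets `J`
of the `n - 1` fundamental roots, `P_J` the corresponding standard parabolic. -/
theorem solomon_identity_GL (p e n : ℕ) [Fact p.Prime] (he : 0 < e) (hn : 1 ≤ n) :
    ∑ J : Finset (Fin (n - 1)),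
        (-1 : ℚ) ^ J.card *
          ((Nat.card (Matrix.GeneralLinearGroup (Fin n) (GaloisField p e)) : ℚ) /
            (Nat.card (P n J (F := GaloisField p e)) : ℚ)) =
      ((p : ℚ) ^ e) ^ (n * (n - 1) / 2) := by
  classical
  letI : Fintype (GaloisField p e) := Fintype.ofFinite _
  have hcF : Fintype.card (GaloisField p e) = p ^ e := by
    rw [← Nat.card_eq_fintype_card]
    exact GaloisField.card p e he.ne'
  have hq2 : 2 ≤ Fintype.card (GaloisField p e) := by
    have h2 := (Fact.out : p.Prime).two_le
    rw [hcF]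
    calc 2 ≤ p := h2
    _ ≤ p ^ e := Nat.le_self_pow he.ne' p
  have hq1 : 1 ≤ Fintype.card (GaloisField p e) := by omega
  set qQ : ℚ := (Fintype.card (GaloisField p e) : ℚ) with hqQ
  have hqQ2 : (2 : ℚ) ≤ qQ := by rw [hqQ]; exact_mod_cast hq2
  have hqQ0 : qQ ≠ 0 := by
    have : (0 : ℚ) < qQ := by linarith
    exact ne_of_gt this
  have hfqn : fq qQ n ≠ 0 := ne_of_gt (fq_pos qQ hqQ2 n)
  have hGL : ((Nat.card (Matrix.GeneralLinearGroup (Fin n) (GaloisField p e))) : ℚ) =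
      qQ ^ (∑ i ∈ range n, i) * fq qQ n := by
    rw [Matrix.card_GL_field,
      Fin.prod_univ_eq_prod_range
        (fun i => Fintype.card (GaloisField p e) ^ n - Fintype.card (GaloisField p e) ^ i) n]
    exact prod_gl_cast _ hq1 n
  have hP : ∀ J : Finset (Fin (n - 1)),
      ((Nat.card (P n J (F := GaloisField p e))) : ℚ) =
        qQ ^ (∑ i ∈ range n, i) * pb qQ n (WJ n J) := by
    intro J
    have h1 : Nat.card (P n J (F := GaloisField p e)) =
        Nat.card {M : Matrix (Fin n) (Fin n) (GaloisField p e) //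
          M.BlockTriangular (bfun n J) ∧ M.det ≠ 0} :=
      (Nat.card_congr (PEquiv n J)).symm
    rw [h1, card_bt_q (bfun n J) (bfun_mono n J)]
    congr 1
    rw [pb, ← Fin.prod_univ_eq_prod_range (fun iv => qQ ^ sW (WJ n J) iv - 1) n]
    exact Finset.prod_congr rfl fun j _ => by rw [sb_eq_sW]
  have hpb : ∀ W, pb qQ n W ≠ 0 := fun W => ne_of_gt (pb_pos qQ hqQ2 n W)
  have hqpow : qQ ^ (∑ i ∈ range n, i) ≠ 0 := pow_ne_zero _ hqQ0
  have hterm : ∀ J : Finset (Fin (n - 1)),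
      (-1 : ℚ) ^ J.card *
          ((Nat.card (Matrix.GeneralLinearGroup (Fin n) (GaloisField p e)) : ℚ) /
            (Nat.card (P n J (F := GaloisField p e)) : ℚ)) =
        ((-1 : ℚ) ^ (n - 1) * fq qQ n) * ((-1 : ℚ) ^ (WJ n J).card / pb qQ n (WJ n J)) := by
    intro J
    rw [hGL, hP J, mul_div_mul_left _ _ hqpow]
    have hcard : J.card + (WJ n J).card = n - 1 := by
      have h1 := WJ_card n J
      have h2 : J.card ≤ n - 1 := by
        have h3 := Finset.card_le_univ J
        rwa [Fintype.card_fin] at h3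
      omega
    have hpowJ : (-1 : ℚ) ^ (n - 1) = (-1 : ℚ) ^ J.card * (-1 : ℚ) ^ (WJ n J).card := by
      rw [← pow_add, hcard]
    have hsq : (-1 : ℚ) ^ (WJ n J).card * (-1 : ℚ) ^ (WJ n J).card = 1 := by
      rw [← pow_add]
      exact Even.neg_one_pow ⟨_, rfl⟩
    rw [hpowJ, div_eq_mul_inv, div_eq_mul_inv]
    linear_combination (-((-1 : ℚ) ^ J.card * fq qQ n * (pb qQ n (WJ n J))⁻¹)) * hsq
  rw [Finset.sum_congr rfl (fun J _ => hterm J), ← Finset.mul_sum]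
  have hbij : (∑ J : Finset (Fin (n - 1)), ((-1 : ℚ) ^ (WJ n J).card / pb qQ n (WJ n J))) =
      ∑ W ∈ (range (n - 1)).powerset, (-1 : ℚ) ^ W.card / pb qQ n W :=
    Finset.sum_nbij' (WJ n) (fun W => univ.filter (fun k : Fin (n - 1) => (k : ℕ) ∉ W))
      (fun J _ => WJ_mem_powerset n J) (fun W _ => mem_univ _)
      (fun J _ => psi_phi n J) (fun W hW => phi_psi n W hW)
      (fun J _ => rfl)
  rw [hbij, key qQ hqQ2 n hn]
  have hsq2 : (-1 : ℚ) ^ (n - 1) * (-1 : ℚ) ^ (n - 1) = 1 := by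
    rw [← pow_add]
    exact Even.neg_one_pow ⟨_, rfl⟩
  have hRHS : ((p : ℚ) ^ e) ^ (n * (n - 1) / 2) = qQ ^ (n.choose 2) := by
    rw [Nat.choose_two_right, hqQ, hcF]
    push_cast
    ring
  rw [hRHS]
  field_simp
  linear_combination hsq2
end

section
/- The q-multinomial (Solomon/Witt) identity: for every integer m ≥ 1, Σ over all ordered compositions (m_1,...,m_k) of m of (-1)^k · [m](q)! / ([m_1](q)!···[m_k](q)!) equals (-1)^m q^{binomial(m,2)}, as polynomials in q. -/
open Finset

noncomputable section QMI

def qX : RatFunc ℚ := RatFunc.X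
def qb (d : ℕ) : RatFunc ℚ := ∑ i ∈ range d, qX ^ i
def qfact (d : ℕ) : RatFunc ℚ := ∏ j ∈ range d, qb (j + 1)

lemma qb_ne_zero {d : ℕ} (hd : 1 ≤ d) : qb d ≠ 0 := by
  have h : qb d = algebraMap (Polynomial ℚ) (RatFunc ℚ)
      (∑ i ∈ range d, Polynomial.X ^ i) := by
    simp [qb, qX, map_sum, map_pow, RatFunc.algebraMap_X]
  rw [h]
  apply RatFunc.algebraMap_ne_zero
  intro hz
  have := congrArg (fun p => Polynomial.coeff p 0) hz
  simp [Polynomial.coeff_X_pow, Finset.sum_ite_eq, hd] at this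
  omega

lemma qfact_ne_zero (d : ℕ) : qfact d ≠ 0 :=
  Finset.prod_ne_zero_iff.2 fun j _ => qb_ne_zero (by omega)

lemma qfact_zero : qfact 0 = 1 := by simp [qfact]

lemma qfact_succ (d : ℕ) : qfact (d + 1) = qfact d * qb (d + 1) := by
  simp [qfact, Finset.prod_range_succ]

lemma qb_succ (d : ℕ) : qb (d + 1) = qb d + qX ^ d := by
  simp [qb, Finset.sum_range_succ]

lemma qb_split (a b : ℕ) : qb (a + b) = qb a + qX ^ a * qb b := by
  induction b with
  | zero => simp [qb]
  | succ b ih =>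
      rw [show a + (b+1) = (a+b)+1 from rfl, qb_succ, ih, qb_succ, pow_add]
      ring

/-- q-binomial coefficient as a rational function, 0 when `k > m`. -/
def gauss (m k : ℕ) : RatFunc ℚ :=
  if k ≤ m then qfact m / (qfact k * qfact (m - k)) else 0

lemma gauss_self (m : ℕ) : gauss m m = 1 := by
  simp [gauss, qfact_zero, div_self (qfact_ne_zero m)]

lemma gauss_pascal (n k : ℕ) (hk : k ≤ n + 1) :
    gauss (n + 1) k = qX ^ k * gauss n k + (if k = 0 then 0 else gauss n (k - 1)) := by
  rcases Nat.eq_zero_or_pos k with rfl | hk0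
  · simp only [gauss, Nat.zero_le, if_pos, qfact_zero, Nat.sub_zero, one_mul, pow_zero,
      if_pos rfl, add_zero]
    rw [div_self (qfact_ne_zero (n+1)), div_self (qfact_ne_zero n)]
  rcases Nat.lt_or_ge n k with hnk | hnk
  · -- k = n + 1
    have hk1 : k = n + 1 := by omega
    subst hk1
    simp only [gauss, le_refl, if_pos, Nat.sub_self, qfact_zero, mul_one,
      show ¬ (n + 1 ≤ n) by omega, if_neg, if_false, mul_zero, zero_add,
      show (n + 1 - 1 : ℕ) = n from rfl, le_refl, if_pos,
      show ¬ (n + 1 = 0) by omega]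
    rw [div_self (qfact_ne_zero (n+1)), div_self (qfact_ne_zero n)]
  · -- 1 ≤ k ≤ n
    obtain ⟨j, rfl⟩ : ∃ j, k = j + 1 := ⟨k - 1, by omega⟩
    have hjn : j + 1 ≤ n := hnk
    simp only [gauss, if_pos hk, if_pos hjn, if_neg (by omega : ¬ (j + 1 = 0)),
      if_pos (by omega : j ≤ n), Nat.add_sub_cancel]
    have h1 : (n + 1) - (j + 1) = n - j := by omega
    have h2 : n - j = (n - (j+1)) + 1 := by omega
    rw [h1, qfact_succ n, h2, qfact_succ (n - (j+1)), qfact_succ j]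
    have e1 : qb (n + 1) = qb (j + 1) + qX ^ (j+1) * qb (n - (j+1) + 1) := by
      rw [← qb_split]; congr 1; omega
    rw [e1]
    have n1 := qfact_ne_zero n
    have n2 := qfact_ne_zero j
    have n3 := qfact_ne_zero (n - (j+1))
    have n4 := qb_ne_zero (show 1 ≤ j + 1 by omega)
    have n5 := qb_ne_zero (show 1 ≤ n - (j+1) + 1 by omega)
    field_simp
    ring

lemma alt_sum (n : ℕ) :
    ∑ k ∈ range (n + 2), (-1 : RatFunc ℚ) ^ k * qX ^ (k.choose 2) * gauss (n + 1) k = 0 := by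
  have hre : ∀ k ∈ range (n + 2),
      (-1 : RatFunc ℚ) ^ k * qX ^ (k.choose 2) * gauss (n + 1) k
        = (-1 : RatFunc ℚ) ^ k * qX ^ (k.choose 2) * (qX ^ k * gauss n k)
          + (-1 : RatFunc ℚ) ^ k * qX ^ (k.choose 2) *
              (if k = 0 then 0 else gauss n (k - 1)) := by
    intro k hk
    rw [gauss_pascal n k (by simpa using Nat.lt_succ_iff.1 (mem_range.1 hk)), mul_add]
  rw [Finset.sum_congr rfl hre, Finset.sum_add_distrib]
  have hA : ∑ k ∈ range (n + 2),
      (-1 : RatFunc ℚ) ^ k * qX ^ (k.choose 2) * (qX ^ k * gauss n k)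
      = ∑ k ∈ range (n + 1), (-1 : RatFunc ℚ) ^ k * qX ^ ((k+1).choose 2) * gauss n k := by
    rw [Finset.sum_range_succ, show gauss n (n+1) = 0 from if_neg (by omega)]
    simp only [mul_zero, zero_mul, add_zero]
    refine Finset.sum_congr rfl fun k _ => ?_
    have : (k+1).choose 2 = k.choose 2 + k := by
      rw [Nat.choose_succ_succ]
      simp [Nat.choose_one_right, Nat.add_comm]
    rw [this, pow_add]
    ring
  have hB : ∑ k ∈ range (n + 2),
      (-1 : RatFunc ℚ) ^ k * qX ^ (k.choose 2) * (if k = 0 then 0 else gauss n (k - 1))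
      = ∑ k ∈ range (n + 1), -((-1 : RatFunc ℚ) ^ k * qX ^ ((k+1).choose 2) * gauss n k) := by
    rw [Finset.sum_range_succ']
    simp only [if_neg (Nat.succ_ne_zero _), Nat.add_sub_cancel, if_pos rfl, if_true, mul_zero, add_zero]
    refine Finset.sum_congr rfl fun k _ => ?_
    rw [pow_succ]
    ring
  rw [hA, hB, ← Finset.sum_add_distrib]
  simp

end QMI

noncomputable section QMI2

lemma alt_sum_partial (n : ℕ) :
    ∑ k ∈ range (n + 1), (-1 : RatFunc ℚ) ^ k * qX ^ (k.choose 2) * gauss (n + 1) k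
      = (-1 : RatFunc ℚ) ^ n * qX ^ ((n+1).choose 2) := by
  have h := alt_sum n
  rw [Finset.sum_range_succ, gauss_self] at h
  have : ∑ k ∈ range (n + 1), (-1 : RatFunc ℚ) ^ k * qX ^ (k.choose 2) * gauss (n + 1) k
      = -((-1 : RatFunc ℚ) ^ (n+1) * qX ^ ((n+1).choose 2) * 1) := by linear_combination h
  rw [this, pow_succ]
  ring

/-- Prepend a block to a composition. -/
def consComp (n : ℕ) (j : Fin (n + 1)) (c : Composition (n - (j : ℕ))) :
    Composition (n + 1) where
  blocks := ((j : ℕ) + 1) :: c.blocks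
  blocks_pos := by
    intro i hi
    rcases List.mem_cons.1 hi with h | h
    · omega
    · exact c.blocks_pos h
  blocks_sum := by
    have := c.blocks_sum
    have hj := j.isLt
    simp only [List.sum_cons, this]
    omega

def splitEquiv (n : ℕ) :
    (Σ j : Fin (n + 1), Composition (n - (j : ℕ))) ≃ Composition (n + 1) := by
  refine Equiv.ofBijective (fun p => consComp n p.1 p.2) ⟨?_, ?_⟩
  · rintro ⟨j1, c1⟩ ⟨j2, c2⟩ h
    have hb : ((j1 : ℕ) + 1) :: c1.blocks = ((j2 : ℕ) + 1) :: c2.blocks :=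
      congrArg Composition.blocks h
    injection hb with h1 h2
    have hj : j1 = j2 := Fin.ext (by omega)
    subst hj
    exact congrArg (Sigma.mk j1) (Composition.ext h2)
  · intro c
    rcases hb : c.blocks with _ | ⟨a, l⟩
    · exfalso
      have := c.blocks_sum
      rw [hb] at this
      simp at this
    · have ha : 0 < a := c.blocks_pos (hb ▸ (List.mem_cons_self : a ∈ a :: l))
      have hsum : a + l.sum = n + 1 := by
        have := c.blocks_sum
        rw [hb] at this
        simpa using this
      have haj : a - 1 < n + 1 := by omega
      refine ⟨⟨⟨a - 1, haj⟩, ⟨l, ?_, ?_⟩⟩, ?_⟩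
      · intro i hi
        exact c.blocks_pos (hb ▸ List.mem_cons_of_mem a hi)
      · simp only
        omega
      · apply Composition.ext
        simp only [consComp, hb]
        congr 1
        omega

end QMI2

noncomputable section QMI3

def S (m : ℕ) : RatFunc ℚ :=
  ∑ c : Composition m, (-1 : RatFunc ℚ) ^ c.length * (qfact m / ((c.blocks.map qfact).prod))

lemma listprod_ne (l : List ℕ) : ((l.map qfact).prod : RatFunc ℚ) ≠ 0 := by
  induction l with
  | nil => simp
  | cons a t ih => simpa using mul_ne_zero (qfact_ne_zero a) ih

lemma S_zero : S 0 = 1 := by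
  rw [S]
  have h1 : ∀ c : Composition 0,
      (-1 : RatFunc ℚ) ^ c.length * (qfact 0 / ((c.blocks.map qfact).prod)) = 1 := by
    intro c
    have hb : c.blocks = [] := by
      rcases hb : c.blocks with _ | ⟨a, l⟩
      · rfl
      · exfalso
        have ha := c.blocks_pos (hb ▸ (List.mem_cons_self : a ∈ a :: l))
        have hs := c.blocks_sum
        rw [hb] at hs
        simp at hs
        omega
    simp [Composition.length, hb, qfact_zero]
  rw [Finset.sum_congr rfl (fun c _ => h1 c)]
  simp [composition_card]

lemma consComp_length (n : ℕ) (j : Fin (n+1)) (c : Composition (n - (j:ℕ))) :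
    (consComp n j c).length = c.length + 1 := by
  simp [consComp, Composition.length]

lemma consComp_prod (n : ℕ) (j : Fin (n+1)) (c : Composition (n - (j:ℕ))) :
    (((consComp n j c).blocks.map qfact).prod : RatFunc ℚ)
      = qfact ((j:ℕ) + 1) * (c.blocks.map qfact).prod := by
  simp [consComp]

lemma S_eq (m : ℕ) : S m = (-1 : RatFunc ℚ) ^ m * qX ^ (m.choose 2) := by
  induction m using Nat.strong_induction_on with
  | _ m ih =>
    match m with
    | 0 => simp [S_zero]
    | (n + 1) =>
      have step1 : S (n + 1)
          = ∑ p : (Σ j : Fin (n + 1), Composition (n - (j : ℕ))),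
              (-1 : RatFunc ℚ) ^ (consComp n p.1 p.2).length *
                (qfact (n + 1) / (((consComp n p.1 p.2).blocks.map qfact).prod)) :=
        (Fintype.sum_equiv (splitEquiv n) _ _ (fun p => rfl)).symm
      rw [step1]
      rw [← Finset.univ_sigma_univ, Finset.sum_sigma]
      have step2 : ∀ j : Fin (n + 1),
          ∑ c : Composition (n - (j : ℕ)),
              (-1 : RatFunc ℚ) ^ (consComp n j c).length *
                (qfact (n + 1) / (((consComp n j c).blocks.map qfact).prod))
          = -(qfact (n + 1) / (qfact ((j : ℕ) + 1) * qfact (n - (j : ℕ)))) *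
              ((-1 : RatFunc ℚ) ^ ((n : ℕ) - (j : ℕ)) * qX ^ ((n - (j : ℕ)).choose 2)) := by
        intro j
        rw [← ih (n - (j : ℕ)) (by omega), S, Finset.mul_sum]
        refine Finset.sum_congr rfl fun c _ => ?_
        rw [consComp_length, consComp_prod]
        have hB := qfact_ne_zero ((j : ℕ) + 1)
        have hD := qfact_ne_zero (n - (j : ℕ))
        have hP := listprod_ne c.blocks
        rw [pow_succ]
        field_simp
      rw [Finset.sum_congr rfl (fun j _ => step2 j)]
      rw [Fin.sum_univ_eq_sum_range
        (fun j => -(qfact (n + 1) / (qfact (j + 1) * qfact (n - j))) *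
              ((-1 : RatFunc ℚ) ^ (n - j) * qX ^ ((n - j).choose 2)))]
      rw [← Finset.sum_range_reflect]
      simp only [Nat.add_sub_cancel]
      have step3 : ∀ k ∈ range (n + 1),
          -(qfact (n + 1) / (qfact ((n - k) + 1) * qfact (n - (n - k)))) *
              ((-1 : RatFunc ℚ) ^ (n - (n - k)) * qX ^ ((n - (n - k)).choose 2))
          = -((-1 : RatFunc ℚ) ^ k * qX ^ (k.choose 2) * gauss (n + 1) k) := by
        intro k hk
        have hk' : k ≤ n := by have := Finset.mem_range.1 hk; omega
        have h1 : n - (n - k) = k := by omega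
        have h2 : (n - k) + 1 = (n + 1) - k := by omega
        rw [h1, h2, gauss, if_pos (by omega : k ≤ n + 1)]
        rw [mul_comm (qfact ((n+1) - k)) (qfact k)]
        ring
      rw [Finset.sum_congr rfl step3, Finset.sum_neg_distrib, alt_sum_partial n, pow_succ]
      ring

end QMI3

/-- **The q-multinomial (Solomon/Witt) identity.** For `m ≥ 1`, summing over all
ordered compositions `(m₁, …, m_k)` of `m`:
`∑ (-1)^k [m]!(q) / ([m₁]!(q) ⋯ [m_k]!(q)) = (-1)^m q^(C(m,2))`,
where `[d](q) = 1 + q + ⋯ + q^(d-1)` and `[d]!(q) = [1](q)[2](q)⋯[d](q)`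
(identity of rational functions, both sides being polynomials in `q`). -/
theorem q_multinomial_identity (m : ℕ) (hm : 1 ≤ m) :
    letI X : RatFunc ℚ := RatFunc.X
    letI qb : ℕ → RatFunc ℚ := fun d => ∑ i ∈ Finset.range d, X ^ i
    letI qfact : ℕ → RatFunc ℚ := fun d => ∏ j ∈ Finset.range d, qb (j + 1)
    ∑ c : Composition m,
        (-1 : RatFunc ℚ) ^ c.length * (qfact m / (c.blocks.map qfact).prod) =
      (-1 : RatFunc ℚ) ^ m * X ^ m.choose 2 := by
  exact S_eq m
end
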